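/- arXiv:math/0102173 — 2 statements merged into one kernel-verified Lean document; each statement's English description precedes it below -/
import Mathlib

section
/- Suppose x ∈ Ω_an becomes invertible in Γ_an,con. Then there exists a polynomial y with coefficients in O[1/p] such that x = y·v for some unit v of Ω_an. -/
open scoped Classical

/-- The analytic setting.  `F = O[1/p]` is the fraction field of a complete discrete
valuation ring `O` which is a finite totally ramified extension of the Witt vectors of an
algebraically closed field `k` of characteristic `p` (encoded via the absolute value `abv`
with `abv p = 1/p`, discreteness, completeness, and algebraically closed residue field),
equipped with a Frobenius lift `σF`.  `Γac = Γ_{an,con}` is the ring of series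
`∑_{n ∈ ℤ} cₙ tⁿ` with `cₙ ∈ F` such that `limsup_{n→+∞} |cₙ|^{1/n} ≤ 1` and
`|cₙ| ≤ p^{cn+d}` for all `n < 0`, for some constants `c, d > 0`; it is encoded by its
coefficient functionals `coeff`, and carries the standard Frobenius `frob = σ_t`
(acting by `σ` on coefficients and sending `t` to `t^p`). -/
structure AnSetting (p : ℕ) [Fact p.Prime] where
  F : Type
  [fieldF : Field F]
  abv : F → ℝ
  abv_nonneg : ∀ x, 0 ≤ abv x
  abv_eq_zero : ∀ x, abv x = 0 ↔ x = 0
  abv_mul : ∀ x y, abv (x * y) = abv x * abv y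
  abv_add_le : ∀ x y, abv (x + y) ≤ max (abv x) (abv y)
  abv_p : abv (p : F) = (p : ℝ)⁻¹
  m : ℕ
  m_pos : 0 < m
  abv_discrete : ∀ x : F, x ≠ 0 → ∃ n : ℤ, abv x = (p : ℝ) ^ ((n : ℝ) / (m : ℝ))
  complete : ∀ f : ℕ → F,
    (∀ ε : ℝ, 0 < ε → ∃ N, ∀ a ≥ N, ∀ b ≥ N, abv (f a - f b) < ε) →
    ∃ x : F, ∀ ε : ℝ, 0 < ε → ∃ N, ∀ a ≥ N, abv (f a - x) < ε
  residue_algClosed : ∀ f : Polynomial F, f.Monic → (∀ i, abv (f.coeff i) ≤ 1) →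
    0 < f.natDegree → ∃ x : F, abv x ≤ 1 ∧ abv (Polynomial.eval x f) < 1
  σF : F ≃+* F
  abv_σF : ∀ x, abv (σF x) = abv x
  σF_frob : ∀ x : F, abv x ≤ 1 → abv (σF x - x ^ p) < 1
  Γac : Type
  [commΓac : CommRing Γac]
  coeff : Γac → ℤ → F
  coeff_injective : Function.Injective coeff
  coeff_add : ∀ x y i, coeff (x + y) i = coeff x i + coeff y i
  coeff_growth : ∀ (x : Γac) (ε : ℝ), 0 < ε → ∃ N : ℤ, 0 ≤ N ∧
    ∀ n : ℤ, N ≤ n → abv (coeff x n) ≤ (1 + ε) ^ n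
  coeff_decay : ∀ x : Γac, ∃ c d : ℝ, 0 < c ∧ 0 < d ∧
    ∀ n : ℤ, n < 0 → abv (coeff x n) ≤ (p : ℝ) ^ (c * (n : ℝ) + d)
  coeff_surjective : ∀ f : ℤ → F,
    (∀ ε : ℝ, 0 < ε → ∃ N : ℤ, 0 ≤ N ∧ ∀ n : ℤ, N ≤ n → abv (f n) ≤ (1 + ε) ^ n) →
    (∃ c d : ℝ, 0 < c ∧ 0 < d ∧ ∀ n : ℤ, n < 0 → abv (f n) ≤ (p : ℝ) ^ (c * (n : ℝ) + d)) →
    ∃ x, coeff x = f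
  coeff_one : ∀ i, coeff 1 i = if i = 0 then 1 else 0
  t : Γac
  coeff_t : ∀ i, coeff t i = if i = 1 then 1 else 0
  const : F →+* Γac
  coeff_const : ∀ a i, coeff (const a) i = if i = 0 then a else 0
  coeff_mul : ∀ (x y : Γac) (n : ℤ) (ε : ℝ), 0 < ε →
    ∃ S : Finset ℤ, ∀ T : Finset ℤ, S ⊆ T →
      abv (coeff (x * y) n - ∑ i ∈ T, coeff x i * coeff y (n - i)) < ε
  frob : Γac →+* Γac
  coeff_frob : ∀ x n, coeff (frob x) n =
    if (p : ℤ) ∣ n then σF (coeff x (n / (p : ℤ))) else 0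

attribute [instance] AnSetting.fieldF AnSetting.commΓac

namespace AnSetting

variable {p : ℕ} [Fact p.Prime] (S : AnSetting p)

/-- The subring `Ω_an ⊆ Γ_{an,con}` of rigid analytic functions on the open unit disc
(series with no negative-index coefficients), as a set. -/
def omegaAnSet : Set S.Γac := {x | ∀ i : ℤ, i < 0 → S.coeff x i = 0}

/-- The subring `Γ_con[1/p] ⊆ Γ_{an,con}`: the elements whose coefficients are bounded
above, as a set. -/
def conPSet : Set S.Γac := {x | ∃ C : ℝ, ∀ i : ℤ, S.abv (S.coeff x i) ≤ C}

/-- The subring `Γ_con ⊆ Γ_{an,con}`: the elements with integral coefficients, as a set. -/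
def conSet : Set S.Γac := {x | ∀ i : ℤ, S.abv (S.coeff x i) ≤ 1}

/-- The subring `Ω = O[[t]] ⊆ Γ_{an,con}`, as a set. -/
def omegaSet : Set S.Γac := {x | (∀ i : ℤ, S.abv (S.coeff x i) ≤ 1) ∧ ∀ i : ℤ, i < 0 → S.coeff x i = 0}

end AnSetting

namespace WPrep

section Seq
variable {F : Type} [Field F]

/-- convolution of coefficient sequences supported in `[0,∞)` -/
noncomputable def conv (f h : ℤ → F) (n : ℤ) : F := ∑ i ∈ Finset.Icc 0 n, f i * h (n - i)

def delta : ℤ → F := fun n => if n = 0 then 1 else 0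

/-- shift down by `D` of the degree-`≥ D` part -/
def Tdn (D : ℤ) (h : ℤ → F) (n : ℤ) : F := if 0 ≤ n then h (n + D) else 0

lemma conv_neg (f h : ℤ → F) (n : ℤ) (hn : n < 0) : conv f h n = 0 := by
  unfold conv
  rw [Finset.Icc_eq_empty (by omega), Finset.sum_empty]

lemma delta_neg (n : ℤ) (hn : n ≠ 0) : (delta n : F) = 0 := if_neg hn

lemma Tdn_neg (D : ℤ) (h : ℤ → F) (n : ℤ) (hn : n < 0) : Tdn D h n = 0 :=
  if_neg (by omega)

lemma conv_add (f h h' : ℤ → F) (n : ℤ) :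
    conv f (fun m => h m + h' m) n = conv f h n + conv f h' n := by
  unfold conv
  rw [← Finset.sum_add_distrib]
  exact Finset.sum_congr rfl fun i _ => by ring

lemma conv_smul (f h : ℤ → F) (c : F) (n : ℤ) :
    conv f (fun m => c * h m) n = c * conv f h n := by
  unfold conv
  rw [Finset.mul_sum]
  exact Finset.sum_congr rfl fun i _ => by ring

lemma conv_sum (f : ℤ → F) (T : Finset ℕ) (h : ℕ → ℤ → F) (n : ℤ) :
    conv f (fun m => ∑ k ∈ T, h k m) n = ∑ k ∈ T, conv f (h k) n := by
  unfold conv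
  rw [Finset.sum_comm]
  exact Finset.sum_congr rfl fun i _ => by rw [Finset.mul_sum]

lemma conv_delta (h : ℤ → F) (hs : ∀ m < 0, h m = 0) (n : ℤ) :
    conv delta h n = h n := by
  rcases lt_or_ge n 0 with hn | hn
  · rw [conv_neg _ _ _ hn, hs n hn]
  · unfold conv delta
    have he : ∀ i ∈ Finset.Icc (0:ℤ) n, (if i = 0 then (1:F) else 0) * h (n - i)
        = if i = 0 then h (n - i) else 0 := fun i _ => by split <;> simp
    rw [Finset.sum_congr rfl he, Finset.sum_ite_eq' (Finset.Icc 0 n) 0 (fun i => h (n - i))]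
    simp [hn]

end Seq

variable {p : ℕ} [Fact p.Prime] (S : AnSetting p)

lemma abv_zero : S.abv 0 = 0 := (S.abv_eq_zero 0).mpr rfl

lemma abv_one : S.abv 1 = 1 := by
  have h := S.abv_mul 1 1
  rw [mul_one] at h
  have h0 : S.abv 1 ≠ 0 := fun h' => one_ne_zero ((S.abv_eq_zero 1).mp h')
  have : S.abv 1 * S.abv 1 = S.abv 1 * 1 := by rw [mul_one]; exact h.symm
  exact mul_left_cancel₀ h0 this

lemma abv_pos (a : S.F) (ha : a ≠ 0) : 0 < S.abv a :=
  lt_of_le_of_ne (S.abv_nonneg a) fun h => ha ((S.abv_eq_zero a).mp h.symm)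

lemma abv_inv (a : S.F) (ha : a ≠ 0) : S.abv a⁻¹ = (S.abv a)⁻¹ := by
  have h := S.abv_mul a a⁻¹
  rw [mul_inv_cancel₀ ha, abv_one] at h
  exact eq_inv_of_mul_eq_one_right h.symm

lemma abv_neg (a : S.F) : S.abv (-a) = S.abv a := by
  have h1 : S.abv (-1 : S.F) = 1 := by
    have h := S.abv_mul (-1) (-1)
    rw [neg_mul_neg, one_mul, abv_one] at h
    have h0 : S.abv (-1 : S.F) ≠ 0 := fun h' => by
      have := (S.abv_eq_zero (-1)).mp h'
      exact one_ne_zero (neg_eq_zero.mp this)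
    rcases mul_self_eq_one_iff.mp h.symm with h2 | h2
    · exact h2
    · linarith [S.abv_nonneg (-1 : S.F)]
  have := S.abv_mul (-1) a
  rwa [neg_one_mul, h1, one_mul] at this

lemma abv_sub_comm (a b : S.F) : S.abv (a - b) = S.abv (b - a) := by
  rw [← abv_neg S (a - b), neg_sub]

lemma abv_sum_le {ι : Type*} (T : Finset ι) (f : ι → S.F) (C : ℝ) (hC : 0 ≤ C)
    (h : ∀ i ∈ T, S.abv (f i) ≤ C) : S.abv (∑ i ∈ T, f i) ≤ C := by
  classical
  revert h
  induction T using Finset.induction with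
  | empty => intro _; simpa [abv_zero] using hC
  | @insert a T' hnew ih =>
    intro h
    rw [Finset.sum_insert hnew]
    exact le_trans (S.abv_add_le _ _) (max_le (h a (Finset.mem_insert_self a T'))
      (ih fun i hi => h i (Finset.mem_insert_of_mem hi)))

lemma abv_add_eq (a b : S.F) (h : S.abv b < S.abv a) : S.abv (a + b) = S.abv a := by
  have h1 : S.abv (a + b) ≤ S.abv a := le_trans (S.abv_add_le a b) (max_le le_rfl h.le)
  have h2 : S.abv a ≤ max (S.abv (a + b)) (S.abv b) := by
    have he : a = (a + b) + (-b) := by ring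
    calc S.abv a = S.abv ((a + b) + (-b)) := by rw [← he]
    _ ≤ max (S.abv (a + b)) (S.abv (-b)) := S.abv_add_le _ _
    _ = max (S.abv (a + b)) (S.abv b) := by rw [abv_neg]
  rcases le_max_iff.mp h2 with h3 | h3
  · linarith
  · linarith

lemma abv_sum_eq {ι : Type*} (T : Finset ι) (f : ι → S.F) (j : ι) (hj : j ∈ T) (γ : ℝ)
    (hγ0 : 0 ≤ γ) (hγ : γ < S.abv (f j)) (h : ∀ i ∈ T, i ≠ j → S.abv (f i) ≤ γ) :
    S.abv (∑ i ∈ T, f i) = S.abv (f j) := by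
  classical
  rw [← Finset.add_sum_erase T f hj]
  exact abv_add_eq S _ _ (lt_of_le_of_lt (abv_sum_le S _ _ γ hγ0
    (fun i hi => h i (Finset.mem_of_mem_erase hi) (Finset.ne_of_mem_erase hi))) hγ)

lemma eq_zero_of_abv_lt (z : S.F) (h : ∀ ε : ℝ, 0 < ε → S.abv z < ε) : z = 0 := by
  refine (S.abv_eq_zero z).mp (le_antisymm ?_ (S.abv_nonneg z))
  by_contra h'
  exact absurd (h (S.abv z) (lt_of_not_ge h')) (lt_irrefl _)

lemma coeff_zero (i : ℤ) : S.coeff 0 i = 0 := by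
  have := S.coeff_add 0 0 i
  rw [add_zero] at this
  exact left_eq_add.mp this

lemma coeff_fun_zero : S.coeff 0 = fun _ => (0 : S.F) := funext (coeff_zero S)

lemma exists_coeff_ne_zero (x : S.Γac) (hx : x ≠ 0) : ∃ n, S.coeff x n ≠ 0 := by
  by_contra h
  push_neg at h
  exact hx (S.coeff_injective (by rw [coeff_fun_zero]; exact funext h))

lemma one_ne_zero' : (1 : S.Γac) ≠ 0 := by
  intro h
  have h1 := coeff_zero S 0
  rw [← h, S.coeff_one 0, if_pos rfl] at h1
  exact one_ne_zero h1

end WPrep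
namespace WPrep

section RealAux

lemma exists_zpow_tail (r C δ : ℝ) (hr0 : 0 < r) (hr1 : r < 1) (hC : 0 ≤ C) (hδ : 0 < δ) :
    ∃ N : ℤ, 0 ≤ N ∧ ∀ n : ℤ, N ≤ n → C * r ^ n ≤ δ := by
  rcases eq_or_lt_of_le hC with hC0 | hC0
  · exact ⟨0, le_refl 0, fun n hn => by
      rw [← hC0, zero_mul]; exact hδ.le⟩
  · obtain ⟨k, hk⟩ := exists_pow_lt_of_lt_one (div_pos hδ hC0) hr1
    refine ⟨k, Int.natCast_nonneg k, fun n hn => ?_⟩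
    have hn0 : (0:ℤ) ≤ n := le_trans (Int.natCast_nonneg k) hn
    have h1 : r ^ n = r ^ n.toNat := by
      rw [← zpow_natCast, Int.toNat_of_nonneg hn0]
    have h2 : r ^ n.toNat ≤ r ^ k :=
      pow_le_pow_of_le_one hr0.le hr1.le (by omega)
    have : C * r ^ n ≤ C * r ^ k := by
      rw [h1]; exact mul_le_mul_of_nonneg_left h2 hC
    calc C * r ^ n ≤ C * r ^ k := this
    _ ≤ C * (δ / C) := mul_le_mul_of_nonneg_left hk.le hC
    _ = δ := by field_simp

lemma exists_zpow_head (R C δ : ℝ) (hR : 1 < R) (hC : 0 ≤ C) (hδ : 0 < δ) :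
    ∃ N : ℤ, ∀ n : ℤ, n ≤ N → C * R ^ n ≤ δ := by
  have hR0 : 0 < R := lt_trans one_pos hR
  have hr0 : 0 < R⁻¹ := inv_pos.mpr hR0
  have hr1 : R⁻¹ < 1 := inv_lt_one_of_one_lt₀ hR
  obtain ⟨M, _, hM⟩ := exists_zpow_tail R⁻¹ C δ hr0 hr1 hC hδ
  refine ⟨-M, fun n hn => ?_⟩
  have : R ^ n = R⁻¹ ^ (-n) := by rw [inv_zpow, ← zpow_neg, neg_neg]
  rw [this]
  exact hM (-n) (by omega)

end RealAux

variable {p : ℕ} [Fact p.Prime] (S : AnSetting p)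

section Lim

def IsLim (f : ℕ → S.F) (L : S.F) : Prop :=
  ∀ ε : ℝ, 0 < ε → ∃ N, ∀ n ≥ N, S.abv (f n - L) < ε

lemma exists_isLim (f : ℕ → S.F)
    (h : ∀ ε : ℝ, 0 < ε → ∃ N, ∀ a ≥ N, ∀ b ≥ N, S.abv (f a - f b) < ε) :
    ∃ L, IsLim S f L := S.complete f h

lemma isLim_unique {f : ℕ → S.F} {L L' : S.F} (h : IsLim S f L) (h' : IsLim S f L') :
    L = L' := by
  have : ∀ ε : ℝ, 0 < ε → S.abv (L - L') < ε := by
    intro ε hε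
    obtain ⟨N, hN⟩ := h ε hε
    obtain ⟨N', hN'⟩ := h' ε hε
    have h1 := hN (max N N') (le_max_left _ _)
    have h2 := hN' (max N N') (le_max_right _ _)
    have : L - L' = -(f (max N N') - L) + (f (max N N') - L') := by ring
    rw [this]
    exact lt_of_le_of_lt (S.abv_add_le _ _)
      (max_lt (by rwa [abv_neg]) h2)
  exact sub_eq_zero.mp (eq_zero_of_abv_lt S _ this)

lemma isLim_const (c : S.F) : IsLim S (fun _ => c) c := by
  intro ε hε
  exact ⟨0, fun n _ => by simpa [abv_zero] using hε⟩

lemma isLim_shift {f : ℕ → S.F} {L : S.F} (h : IsLim S f L) :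
    IsLim S (fun n => f (n + 1)) L := by
  intro ε hε
  obtain ⟨N, hN⟩ := h ε hε
  exact ⟨N, fun n hn => hN (n + 1) (by omega)⟩

lemma isLim_mul_const {f : ℕ → S.F} {L : S.F} (c : S.F) (h : IsLim S f L) :
    IsLim S (fun n => c * f n) (c * L) := by
  intro ε hε
  rcases eq_or_ne c 0 with rfl | hc
  · exact ⟨0, fun n _ => by simpa [abv_zero] using hε⟩
  · have hc0 : 0 < S.abv c := abv_pos S c hc
    obtain ⟨N, hN⟩ := h (ε / S.abv c) (div_pos hε hc0)
    refine ⟨N, fun n hn => ?_⟩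
    have : c * f n - c * L = c * (f n - L) := by ring
    rw [this, S.abv_mul]
    calc S.abv c * S.abv (f n - L) < S.abv c * (ε / S.abv c) :=
          mul_lt_mul_of_pos_left (hN n hn) hc0
    _ = ε := by field_simp

lemma isLim_add {f g : ℕ → S.F} {Lf Lg : S.F} (hf : IsLim S f Lf) (hg : IsLim S g Lg) :
    IsLim S (fun n => f n + g n) (Lf + Lg) := by
  intro ε hε
  obtain ⟨N, hN⟩ := hf ε hε
  obtain ⟨N', hN'⟩ := hg ε hε
  refine ⟨max N N', fun n hn => ?_⟩
  have : f n + g n - (Lf + Lg) = (f n - Lf) + (g n - Lg) := by ring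
  rw [this]
  exact lt_of_le_of_lt (S.abv_add_le _ _)
    (max_lt (hN n (le_trans (le_max_left _ _) hn)) (hN' n (le_trans (le_max_right _ _) hn)))

lemma isLim_neg {f : ℕ → S.F} {L : S.F} (h : IsLim S f L) :
    IsLim S (fun n => -(f n)) (-L) := by
  intro ε hε
  obtain ⟨N, hN⟩ := h ε hε
  refine ⟨N, fun n hn => ?_⟩
  have : -(f n) - (-L) = -(f n - L) := by ring
  rw [this, abv_neg]
  exact hN n hn

lemma isLim_finsetSum {ι : Type*} (T : Finset ι) (f : ι → ℕ → S.F) (L : ι → S.F)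
    (h : ∀ i ∈ T, IsLim S (f i) (L i)) :
    IsLim S (fun n => ∑ i ∈ T, f i n) (∑ i ∈ T, L i) := by
  classical
  revert h
  induction T using Finset.induction with
  | empty => intro _; simpa using isLim_const S 0
  | @insert a T' hnew ih =>
    intro h
    have h1 := h a (Finset.mem_insert_self a T')
    have h2 := ih fun i hi => h i (Finset.mem_insert_of_mem hi)
    have := isLim_add S h1 h2
    simpa [Finset.sum_insert hnew] using this

lemma abv_le_of_isLim {f : ℕ → S.F} {L : S.F} {C : ℝ} (hC : ∀ n, S.abv (f n) ≤ C)
    (h : IsLim S f L) : S.abv L ≤ C := by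
  by_contra hlt
  push_neg at hlt
  obtain ⟨N, hN⟩ := h (S.abv L - C) (by linarith)
  have h1 := hN N (le_refl N)
  have h2 : L = (L - f N) + f N := by ring
  have h3 : S.abv L ≤ max (S.abv (L - f N)) (S.abv (f N)) := by
    calc S.abv L = S.abv ((L - f N) + f N) := by rw [← h2]
    _ ≤ _ := S.abv_add_le _ _
  rcases le_max_iff.mp h3 with h4 | h4
  · rw [abv_sub_comm] at h4; linarith [hC N, S.abv_nonneg (f N)]
  · linarith [hC N]

lemma isLim_zero_of_bound {f : ℕ → S.F} (C r : ℝ) (hr0 : 0 ≤ r) (hr1 : r < 1)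
    (hC : 0 ≤ C) (h : ∀ n, S.abv (f n) ≤ C * r ^ n) : IsLim S f 0 := by
  intro ε hε
  rcases eq_or_lt_of_le hC with hC0 | hC0
  · exact ⟨0, fun n _ => by
      have := h n
      rw [← hC0, zero_mul] at this
      rw [sub_zero]
      exact lt_of_le_of_lt this hε⟩
  · obtain ⟨k, hk⟩ := exists_pow_lt_of_lt_one (div_pos hε hC0) hr1
    refine ⟨k, fun n hn => ?_⟩
    rw [sub_zero]
    calc S.abv (f n) ≤ C * r ^ n := h n
    _ ≤ C * r ^ k := mul_le_mul_of_nonneg_left (pow_le_pow_of_le_one hr0 hr1.le hn) hC0.le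
    _ < C * (ε / C) := mul_lt_mul_of_pos_left hk hC0
    _ = ε := by field_simp

end Lim

end WPrep
namespace WPrep

variable {p : ℕ} [Fact p.Prime] (S : AnSetting p)

/-- the `n`-th term of the Gauss norm at radius `ρ` -/
noncomputable def tm (x : S.Γac) (ρ : ℝ) (n : ℤ) : ℝ := S.abv (S.coeff x n) * ρ ^ n

lemma tm_nonneg (x : S.Γac) (ρ : ℝ) (h0 : 0 < ρ) (n : ℤ) : 0 ≤ tm S x ρ n :=
  mul_nonneg (S.abv_nonneg _) (zpow_pos h0 n).le

lemma tm_pos (x : S.Γac) (ρ : ℝ) (h0 : 0 < ρ) (n : ℤ) (hn : S.coeff x n ≠ 0) :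
    0 < tm S x ρ n := mul_pos (abv_pos S _ hn) (zpow_pos h0 n)

lemma tm_eq_zero (x : S.Γac) (ρ : ℝ) (h0 : 0 < ρ) (n : ℤ) (hn : S.coeff x n = 0) :
    tm S x ρ n = 0 := by
  unfold tm; rw [hn, abv_zero, zero_mul]

lemma coeff_ne_zero_of_tm_pos {x : S.Γac} {ρ : ℝ} {n : ℤ} (h0 : 0 < ρ)
    (h : 0 < tm S x ρ n) : S.coeff x n ≠ 0 := by
  intro hc
  rw [tm_eq_zero S x ρ h0 n hc] at h
  exact lt_irrefl 0 h

lemma tm_scale (x : S.Γac) (ρ ρ' : ℝ) (h0 : 0 < ρ) (h0' : 0 < ρ') (k : ℤ) :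
    tm S x ρ' k = tm S x ρ k * (ρ' / ρ) ^ k := by
  unfold tm
  rw [mul_assoc, ← mul_zpow]
  congr 2
  field_simp

lemma tail_small (x : S.Γac) (ρ : ℝ) (h0 : 0 < ρ) (h1 : ρ < 1) (δ : ℝ) (hδ : 0 < δ) :
    ∃ N : ℤ, ∀ n ≥ N, tm S x ρ n ≤ δ := by
  set r : ℝ := (1 + ρ) / 2 with hr
  have hρr : ρ < r := by rw [hr]; linarith
  have hr1 : r < 1 := by rw [hr]; linarith
  have hr0 : 0 < r := lt_trans h0 hρr
  set ε : ℝ := r / ρ - 1 with hε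
  have hε0 : 0 < ε := by
    rw [hε]
    have : 1 < r / ρ := (one_lt_div h0).mpr hρr
    linarith
  have hrρ : (1 + ε) * ρ = r := by rw [hε]; field_simp; ring
  obtain ⟨N₁, hN₁0, hN₁⟩ := S.coeff_growth x ε hε0
  obtain ⟨N₂, _, hN₂⟩ := exists_zpow_tail r 1 δ hr0 hr1 zero_le_one hδ
  refine ⟨max N₁ N₂, fun n hn => ?_⟩
  have hn1 : N₁ ≤ n := le_trans (le_max_left _ _) hn
  have hn2 : N₂ ≤ n := le_trans (le_max_right _ _) hn
  have h2 : tm S x ρ n ≤ (1 + ε) ^ n * ρ ^ n := by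
    unfold tm
    exact mul_le_mul_of_nonneg_right (hN₁ n hn1) (zpow_pos h0 n).le
  calc tm S x ρ n ≤ (1 + ε) ^ n * ρ ^ n := h2
  _ = r ^ n := by rw [← mul_zpow, hrρ]
  _ = 1 * r ^ n := (one_mul _).symm
  _ ≤ δ := hN₂ n hn2

lemma head_small (x : S.Γac) (ρ c d : ℝ) (hc : 0 < c) (hρ0 : 0 < ρ)
    (hρ : ((p : ℕ) : ℝ) ^ (-c) < ρ)
    (hdecay : ∀ n : ℤ, n < 0 → S.abv (S.coeff x n) ≤ ((p : ℕ) : ℝ) ^ (c * (n : ℝ) + d))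
    (δ : ℝ) (hδ : 0 < δ) : ∃ N : ℤ, ∀ n ≤ N, tm S x ρ n ≤ δ := by
  have hp1 : (1 : ℝ) < (p : ℝ) := by
    have := (Fact.out : p.Prime).two_le
    exact_mod_cast Nat.lt_of_lt_of_le Nat.one_lt_two this
  have hp0 : (0 : ℝ) < (p : ℝ) := lt_trans one_pos hp1
  set R : ℝ := (p : ℝ) ^ (c : ℝ) * ρ with hR
  have hpc0 : (0 : ℝ) < (p : ℝ) ^ (c : ℝ) := Real.rpow_pos_of_pos hp0 c
  have hR1 : 1 < R := by
    have h1 : (p : ℝ) ^ (c : ℝ) * ((p : ℝ) ^ (-c : ℝ)) = 1 := by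
      rw [← Real.rpow_add hp0]; simp
    calc (1:ℝ) = (p : ℝ) ^ (c : ℝ) * ((p : ℝ) ^ (-c : ℝ)) := h1.symm
    _ < R := by rw [hR]; exact mul_lt_mul_of_pos_left hρ hpc0
  have hC0 : (0:ℝ) ≤ (p : ℝ) ^ (d : ℝ) := (Real.rpow_pos_of_pos hp0 d).le
  obtain ⟨N₀, hN₀⟩ := exists_zpow_head R ((p : ℝ) ^ (d : ℝ)) δ hR1 hC0 hδ
  refine ⟨min N₀ (-1), fun n hn => ?_⟩
  have hn0 : n < 0 := by omega
  have hnN : n ≤ N₀ := le_trans hn (min_le_left _ _)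
  have key : ((p : ℕ) : ℝ) ^ (c * (n : ℝ) + d) * ρ ^ n = (p : ℝ) ^ (d : ℝ) * R ^ n := by
    rw [Real.rpow_add hp0, Real.rpow_mul hp0.le]
    rw [Real.rpow_intCast ((p:ℝ) ^ (c:ℝ)) n]
    rw [hR, mul_zpow]
    ring
  calc tm S x ρ n ≤ ((p : ℕ) : ℝ) ^ (c * (n : ℝ) + d) * ρ ^ n :=
        mul_le_mul_of_nonneg_right (hdecay n hn0) (zpow_pos hρ0 n).le
  _ = (p : ℝ) ^ (d : ℝ) * R ^ n := key
  _ ≤ δ := hN₀ n hnN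

lemma exists_np (x : S.Γac) (hx : x ≠ 0) (ρ : ℝ) (h0 : 0 < ρ)
    (hplus : ∀ δ : ℝ, 0 < δ → ∃ N : ℤ, ∀ n ≥ N, tm S x ρ n ≤ δ)
    (hminus : ∀ δ : ℝ, 0 < δ → ∃ N : ℤ, ∀ n ≤ N, tm S x ρ n ≤ δ) :
    ∃ (e d : ℤ) (M γ : ℝ), e ≤ d ∧ 0 < M ∧ 0 ≤ γ ∧ γ < M ∧
      tm S x ρ e = M ∧ tm S x ρ d = M ∧ (∀ i, tm S x ρ i ≤ M) ∧
      (∀ i, i < e → tm S x ρ i ≤ γ) ∧ (∀ i, d < i → tm S x ρ i ≤ γ) := by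
  classical
  obtain ⟨n₀, hn₀⟩ := exists_coeff_ne_zero S x hx
  set M₀ : ℝ := tm S x ρ n₀ with hM₀
  have hM₀0 : 0 < M₀ := tm_pos S x ρ h0 n₀ hn₀
  obtain ⟨Np, hNp⟩ := hplus (M₀ / 2) (by linarith)
  obtain ⟨Nm, hNm⟩ := hminus (M₀ / 2) (by linarith)
  set lo : ℤ := min Nm n₀ with hlo
  set hi : ℤ := max Np n₀ with hhi
  have hn₀W : n₀ ∈ Finset.Icc lo hi := Finset.mem_Icc.mpr ⟨min_le_right _ _, le_max_right _ _⟩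
  have hWne : (Finset.Icc lo hi).Nonempty := ⟨n₀, hn₀W⟩
  have hWine : ((Finset.Icc lo hi).image (tm S x ρ)).Nonempty := hWne.image _
  set M : ℝ := ((Finset.Icc lo hi).image (tm S x ρ)).max' hWine with hM
  have hMmem := Finset.max'_mem _ hWine
  obtain ⟨datt, hdattW, hdatt⟩ := Finset.mem_image.mp hMmem
  have hMge : M₀ ≤ M := by
    rw [hM₀]; exact Finset.le_max' _ _ (Finset.mem_image_of_mem _ hn₀W)
  have hM0 : 0 < M := lt_of_lt_of_le hM₀0 hMge
  have hout : ∀ i : ℤ, i ∉ Finset.Icc lo hi → tm S x ρ i ≤ M₀ / 2 := by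
    intro i hi'
    rw [Finset.mem_Icc] at hi'
    push_neg at hi'
    rcases lt_or_ge i lo with h | h
    · exact hNm i (by omega)
    · exact hNp i (by have := hi' h; omega)
  have hall : ∀ i, tm S x ρ i ≤ M := by
    intro i
    by_cases hiW : i ∈ Finset.Icc lo hi
    · exact Finset.le_max' _ _ (Finset.mem_image_of_mem _ hiW)
    · linarith [hout i hiW]
  -- attainers
  set Att : Finset ℤ := (Finset.Icc lo hi).filter (fun i => tm S x ρ i = M) with hAtt
  have hAttne : Att.Nonempty := ⟨datt, Finset.mem_filter.mpr ⟨hdattW, hdatt⟩⟩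
  have hAttmem : ∀ i : ℤ, tm S x ρ i = M → i ∈ Att := by
    intro i hiM
    refine Finset.mem_filter.mpr ⟨?_, hiM⟩
    by_contra hiW
    linarith [hout i hiW]
  set e : ℤ := Att.min' hAttne with he
  set d : ℤ := Att.max' hAttne with hd
  have hetm : tm S x ρ e = M := (Finset.mem_filter.mp (Finset.min'_mem _ hAttne)).2
  have hdtm : tm S x ρ d = M := (Finset.mem_filter.mp (Finset.max'_mem _ hAttne)).2
  -- gap
  obtain ⟨Np', hNp'⟩ := hplus (M / 2) (by linarith)
  obtain ⟨Nm', hNm'⟩ := hminus (M / 2) (by linarith)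
  set lo' : ℤ := min Nm' e with hlo'
  set hi' : ℤ := max Np' d with hhi'
  set G : Finset ℝ := insert (M / 2)
    (((Finset.Icc lo' hi').filter (fun i => tm S x ρ i ≠ M)).image (tm S x ρ)) with hG
  set γ : ℝ := G.max' (Finset.insert_nonempty _ _) with hγdef
  have hγM : γ < M := by
    rw [hγdef]
    rw [Finset.max'_lt_iff]
    intro b hb
    rcases Finset.mem_insert.mp hb with hb | hb
    · rw [hb]; linarith
    · obtain ⟨i, hiF, hib⟩ := Finset.mem_image.mp hb
      have := (Finset.mem_filter.mp hiF).2
      rw [← hib]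
      exact lt_of_le_of_ne (hall i) this
  have hγ0 : 0 ≤ γ := by
    have : M / 2 ≤ γ := Finset.le_max' _ _ (Finset.mem_insert_self _ _)
    linarith
  have hγbound : ∀ i : ℤ, tm S x ρ i ≠ M → tm S x ρ i ≤ γ := by
    intro i hiM
    by_cases hiW : i ∈ Finset.Icc lo' hi'
    · exact Finset.le_max' _ _ (Finset.mem_insert_of_mem
        (Finset.mem_image_of_mem _ (Finset.mem_filter.mpr ⟨hiW, hiM⟩)))
    · have hle : tm S x ρ i ≤ M / 2 := by
        rw [Finset.mem_Icc] at hiW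
        push_neg at hiW
        rcases lt_or_ge i lo' with h | h
        · exact hNm' i (by omega)
        · exact hNp' i (by have := hiW h; omega)
      linarith [Finset.le_max' G (M/2) (Finset.mem_insert_self _ _), hγ0, hle,
        (Finset.le_max' G (M/2) (Finset.mem_insert_self _ _))]
  refine ⟨e, d, M, γ, Finset.min'_le _ _ (Finset.max'_mem _ hAttne), hM0, hγ0, hγM, hetm, hdtm, hall, ?_, ?_⟩
  · intro i hie
    refine hγbound i fun hiM => ?_
    have := Finset.min'_le _ _ (hAttmem i hiM)
    omega
  · intro i hdi
    refine hγbound i fun hiM => ?_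
    have := Finset.le_max' _ _ (hAttmem i hiM)
    omega

end WPrep
namespace WPrep

variable {p : ℕ} [Fact p.Prime] (S : AnSetting p)

lemma abv_term_eq (x y : S.Γac) (ρ : ℝ) (h0 : 0 < ρ) (n i : ℤ) :
    S.abv (S.coeff x i * S.coeff y (n - i)) * ρ ^ n = tm S x ρ i * tm S y ρ (n - i) := by
  unfold tm
  rw [S.abv_mul]
  rw [show n = i + (n - i) by ring, zpow_add₀ (ne_of_gt h0)]
  ring_nf

/-- core multiplicativity: if the `i`-th term strictly dominates all other
products of terms in the convolution at `i + j`, then the coefficient of the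
product at `i + j` has the expected size. -/
lemma abv_coeff_mul_eq (x y : S.Γac) (ρ : ℝ) (h0 : 0 < ρ) (ix iy : ℤ) (γ : ℝ)
    (hγ0 : 0 ≤ γ) (hγ : γ < tm S x ρ ix * tm S y ρ iy)
    (hterm : ∀ i : ℤ, i ≠ ix → tm S x ρ i * tm S y ρ (ix + iy - i) ≤ γ) :
    S.abv (S.coeff (x * y) (ix + iy)) * ρ ^ (ix + iy) = tm S x ρ ix * tm S y ρ iy := by
  classical
  set n : ℤ := ix + iy with hn
  set K : ℝ := tm S x ρ ix * tm S y ρ iy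
  have hK0 : 0 < K := lt_of_le_of_lt hγ0 hγ
  have hρn : (0:ℝ) < ρ ^ n := zpow_pos h0 n
  have hKρ : 0 < K / ρ ^ n := div_pos hK0 hρn
  obtain ⟨Sf, hSf⟩ := S.coeff_mul x y n (K / ρ ^ n / 2) (by linarith)
  set T : Finset ℤ := insert ix Sf with hT
  have hTsub : Sf ⊆ T := Finset.subset_insert _ _
  have hixT : ix ∈ T := Finset.mem_insert_self _ _
  have habv : ∀ i ∈ T, i ≠ ix → S.abv (S.coeff x i * S.coeff y (n - i)) ≤ γ / ρ ^ n := by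
    intro i _ hi
    rw [le_div_iff₀ hρn]
    rw [abv_term_eq S x y ρ h0 n i]
    exact hterm i hi
  have hctr : S.abv (S.coeff x ix * S.coeff y (n - ix)) = K / ρ ^ n := by
    rw [eq_div_iff (ne_of_gt hρn)]
    have : n - ix = iy := by omega
    rw [abv_term_eq S x y ρ h0 n ix, this]
  have hsum : S.abv (∑ i ∈ T, S.coeff x i * S.coeff y (n - i)) = K / ρ ^ n := by
    rw [abv_sum_eq S T _ ix hixT (γ / ρ ^ n) (div_nonneg hγ0 hρn.le) ?_ habv]
    · exact hctr
    · rw [hctr]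
      exact div_lt_div_of_pos_right hγ hρn
  have hdiff := hSf T hTsub
  have : S.abv (S.coeff (x * y) n) = K / ρ ^ n := by
    have hrw : S.coeff (x * y) n =
        (∑ i ∈ T, S.coeff x i * S.coeff y (n - i)) +
        (S.coeff (x * y) n - ∑ i ∈ T, S.coeff x i * S.coeff y (n - i)) := by ring
    rw [hrw]
    rw [abv_add_eq S _ _ (by rw [hsum]; linarith)]
    exact hsum
  rw [this]
  field_simp

lemma attainer_mono (x : S.Γac) (ρ ρ' : ℝ) (h0 : 0 < ρ) (hρρ' : ρ < ρ') (i j : ℤ)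
    (hi : ∀ k, tm S x ρ k ≤ tm S x ρ i)
    (hj : ∀ k, tm S x ρ' k ≤ tm S x ρ' j)
    (hjne : S.coeff x j ≠ 0) : i ≤ j := by
  by_contra hij
  push_neg at hij   -- j < i
  have h0' : 0 < ρ' := lt_trans h0 hρρ'
  have hbase : 1 < ρ' / ρ := (one_lt_div h0).mpr hρρ'
  have h1 : tm S x ρ' j < tm S x ρ' i := by
    rw [tm_scale S x ρ ρ' h0 h0' j, tm_scale S x ρ ρ' h0 h0' i]
    calc tm S x ρ j * (ρ' / ρ) ^ j < tm S x ρ j * (ρ' / ρ) ^ i := by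
          refine mul_lt_mul_of_pos_left ?_ (tm_pos S x ρ h0 j hjne)
          exact zpow_lt_zpow_right₀ hbase hij
    _ ≤ tm S x ρ i * (ρ' / ρ) ^ i :=
          mul_le_mul_of_nonneg_right (hi j) (zpow_pos (lt_trans one_pos hbase) i).le
  exact absurd (hj i) (not_le.mpr h1)

end WPrep
namespace WPrep

variable {p : ℕ} [Fact p.Prime] (S : AnSetting p)

lemma sum_attainers_eq_zero (x w : S.Γac) (hxw : x * w = 1) (ρ : ℝ) (h0 : 0 < ρ)
    (ix iw : ℤ) (γ : ℝ) (hγ0 : 0 ≤ γ) (hγ : γ < tm S x ρ ix * tm S w ρ iw)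
    (hterm : ∀ i, i ≠ ix → tm S x ρ i * tm S w ρ (ix + iw - i) ≤ γ) : ix + iw = 0 := by
  have h := abv_coeff_mul_eq S x w ρ h0 ix iw γ hγ0 hγ hterm
  rw [hxw, S.coeff_one] at h
  by_contra hne
  rw [if_neg hne, abv_zero, zero_mul] at h
  linarith [lt_of_le_of_lt hγ0 hγ]

lemma d_add_d (x w : S.Γac) (hxw : x * w = 1) (ρ : ℝ) (h0 : 0 < ρ)
    (dx : ℤ) (Mx γx : ℝ) (hMx0 : 0 < Mx) (hγx0 : 0 ≤ γx) (hγxM : γx < Mx)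
    (hdx : tm S x ρ dx = Mx) (hxall : ∀ i, tm S x ρ i ≤ Mx)
    (hxab : ∀ i, dx < i → tm S x ρ i ≤ γx)
    (dw : ℤ) (Mw γw : ℝ) (hMw0 : 0 < Mw) (hγw0 : 0 ≤ γw) (hγwM : γw < Mw)
    (hdw : tm S w ρ dw = Mw) (hwall : ∀ i, tm S w ρ i ≤ Mw)
    (hwab : ∀ i, dw < i → tm S w ρ i ≤ γw) : dx + dw = 0 := by
  refine sum_attainers_eq_zero S x w hxw ρ h0 dx dw (max (γx * Mw) (Mx * γw))
    (le_max_of_le_left (mul_nonneg hγx0 hMw0.le)) ?_ ?_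
  · rw [hdx, hdw]
    exact max_lt (mul_lt_mul_of_pos_right hγxM hMw0) (mul_lt_mul_of_pos_left hγwM hMx0)
  · intro i hi
    rcases lt_or_gt_of_ne hi with h | h
    · refine le_max_of_le_right ?_
      exact mul_le_mul (hxall i) (hwab _ (by omega)) (tm_nonneg S w ρ h0 _) hMx0.le
    · refine le_max_of_le_left ?_
      exact mul_le_mul (hxab i h) (hwall _) (tm_nonneg S w ρ h0 _) hγx0

lemma e_add_e (x w : S.Γac) (hxw : x * w = 1) (ρ : ℝ) (h0 : 0 < ρ)
    (ex : ℤ) (Mx γx : ℝ) (hMx0 : 0 < Mx) (hγx0 : 0 ≤ γx) (hγxM : γx < Mx)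
    (hex : tm S x ρ ex = Mx) (hxall : ∀ i, tm S x ρ i ≤ Mx)
    (hxbe : ∀ i, i < ex → tm S x ρ i ≤ γx)
    (ew : ℤ) (Mw γw : ℝ) (hMw0 : 0 < Mw) (hγw0 : 0 ≤ γw) (hγwM : γw < Mw)
    (hew : tm S w ρ ew = Mw) (hwall : ∀ i, tm S w ρ i ≤ Mw)
    (hwbe : ∀ i, i < ew → tm S w ρ i ≤ γw) : ex + ew = 0 := by
  refine sum_attainers_eq_zero S x w hxw ρ h0 ex ew (max (γx * Mw) (Mx * γw))
    (le_max_of_le_left (mul_nonneg hγx0 hMw0.le)) ?_ ?_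
  · rw [hex, hew]
    exact max_lt (mul_lt_mul_of_pos_right hγxM hMw0) (mul_lt_mul_of_pos_left hγwM hMx0)
  · intro i hi
    rcases lt_or_gt_of_ne hi with h | h
    · refine le_max_of_le_left ?_
      exact mul_le_mul (hxbe i h) (hwall _) (tm_nonneg S w ρ h0 _) hγx0
    · refine le_max_of_le_right ?_
      exact mul_le_mul (hxall i) (hwbe _ (by omega)) (tm_nonneg S w ρ h0 _) hMx0.le

lemma one_lt_p : (1 : ℝ) < ((p : ℕ) : ℝ) := by
  have := (Fact.out : p.Prime).two_le
  exact_mod_cast Nat.lt_of_lt_of_le Nat.one_lt_two this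

lemma exists_dominant (x w : S.Γac) (hxΩ : ∀ i : ℤ, i < 0 → S.coeff x i = 0)
    (hxw : x * w = 1) :
    ∃ (D : ℤ) (r₂ : ℝ), 0 ≤ D ∧ 0 < r₂ ∧ r₂ < 1 ∧ S.coeff x D ≠ 0 ∧
      ∀ ρ : ℝ, r₂ < ρ → ρ < 1 → ∃ Θ : ℝ, 0 ≤ Θ ∧ Θ < 1 ∧
        tm S x ρ D ≠ 0 ∧ ∀ n : ℤ, n ≠ D → tm S x ρ n ≤ Θ * tm S x ρ D := by
  have hx0 : x ≠ 0 := by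
    rintro rfl
    rw [zero_mul] at hxw
    exact one_ne_zero' S hxw.symm
  have hw0 : w ≠ 0 := by
    rintro rfl
    rw [mul_zero] at hxw
    exact one_ne_zero' S hxw.symm
  obtain ⟨c, dd, hc, hdd, hdecay⟩ := S.coeff_decay w
  have hp1 : (1:ℝ) < (p : ℝ) := one_lt_p (p := p)
  set β : ℝ := ((p:ℕ) : ℝ) ^ (-c) with hβ
  have hβ0 : 0 < β := Real.rpow_pos_of_pos (lt_trans one_pos hp1) _
  have hβ1 : β < 1 := Real.rpow_lt_one_of_one_lt_of_neg hp1 (by linarith)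
  set r₂ : ℝ := (β + 1) / 2 with hr₂
  have hr₂0 : 0 < r₂ := by rw [hr₂]; linarith
  have hr₂1 : r₂ < 1 := by rw [hr₂]; linarith
  have hβr₂ : β < r₂ := by rw [hr₂]; linarith
  -- np data constructor for x at any radius in (0,1)
  have npx : ∀ ρ : ℝ, 0 < ρ → ρ < 1 →
      ∃ (e d : ℤ) (M γ : ℝ), e ≤ d ∧ 0 < M ∧ 0 ≤ γ ∧ γ < M ∧
        tm S x ρ e = M ∧ tm S x ρ d = M ∧ (∀ i, tm S x ρ i ≤ M) ∧
        (∀ i, i < e → tm S x ρ i ≤ γ) ∧ (∀ i, d < i → tm S x ρ i ≤ γ) := by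
    intro ρ h0 h1
    refine exists_np S x hx0 ρ h0 (tail_small S x ρ h0 h1) ?_
    intro δ hδ
    exact ⟨-1, fun n hn => by
      rw [tm_eq_zero S x ρ h0 n (hxΩ n (by omega))]; exact hδ.le⟩
  have npw : ∀ ρ : ℝ, β < ρ → ρ < 1 →
      ∃ (e d : ℤ) (M γ : ℝ), e ≤ d ∧ 0 < M ∧ 0 ≤ γ ∧ γ < M ∧
        tm S w ρ e = M ∧ tm S w ρ d = M ∧ (∀ i, tm S w ρ i ≤ M) ∧
        (∀ i, i < e → tm S w ρ i ≤ γ) ∧ (∀ i, d < i → tm S w ρ i ≤ γ) := by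
    intro ρ hβρ h1
    have h0 : 0 < ρ := lt_trans hβ0 hβρ
    exact exists_np S w hw0 ρ h0 (tail_small S w ρ h0 h1)
      (head_small S w ρ c dd hc h0 hβρ hdecay)
  -- base radius r₂
  obtain ⟨ex, dx, Mx, γx, hexdx, hMx0, hγx0, hγxM, hex, hdx, hxall, hxbe, hxab⟩ :=
    npx r₂ hr₂0 hr₂1
  obtain ⟨ew, dw, Mw, γw, hewdw, hMw0, hγw0, hγwM, hew, hdw, hwall, hwbe, hwab⟩ :=
    npw r₂ hβr₂ hr₂1
  have A1 : dx + dw = 0 :=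
    d_add_d S x w hxw r₂ hr₂0 dx Mx γx hMx0 hγx0 hγxM hdx hxall hxab
      dw Mw γw hMw0 hγw0 hγwM hdw hwall hwab
  have hDne : S.coeff x dx ≠ 0 :=
    coeff_ne_zero_of_tm_pos S hr₂0 (by rw [hdx]; exact hMx0)
  have hD0 : (0:ℤ) ≤ dx := by
    by_contra h
    exact hDne (hxΩ dx (by omega))
  refine ⟨dx, r₂, hD0, hr₂0, hr₂1, hDne, ?_⟩
  intro ρ hρ1 hρ2
  have h0ρ : 0 < ρ := lt_trans hr₂0 hρ1
  obtain ⟨ex', dx', Mx', γx', hexdx', hMx0', hγx0', hγxM', hex', hdx', hxall', hxbe', hxab'⟩ :=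
    npx ρ h0ρ hρ2
  obtain ⟨ew', dw', Mw', γw', hewdw', hMw0', hγw0', hγwM', hew', hdw', hwall', hwbe', hwab'⟩ :=
    npw ρ (lt_trans hβr₂ hρ1) hρ2
  have A2 : dx' + dw' = 0 :=
    d_add_d S x w hxw ρ h0ρ dx' Mx' γx' hMx0' hγx0' hγxM' hdx' hxall' hxab'
      dw' Mw' γw' hMw0' hγw0' hγwM' hdw' hwall' hwab'
  have E2 : ex' + ew' = 0 :=
    e_add_e S x w hxw ρ h0ρ ex' Mx' γx' hMx0' hγx0' hγxM' hex' hxall' hxbe'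
      ew' Mw' γw' hMw0' hγw0' hγwM' hew' hwall' hwbe'
  have mono1 : dx ≤ ex' :=
    attainer_mono S x r₂ ρ hr₂0 hρ1 dx ex'
      (fun k => by rw [hdx]; exact hxall k)
      (fun k => by rw [hex']; exact hxall' k)
      (coeff_ne_zero_of_tm_pos S h0ρ (by rw [hex']; exact hMx0'))
  have mono2 : dw ≤ ew' :=
    attainer_mono S w r₂ ρ hr₂0 hρ1 dw ew'
      (fun k => by rw [hdw]; exact hwall k)
      (fun k => by rw [hew']; exact hwall' k)
      (coeff_ne_zero_of_tm_pos S h0ρ (by rw [hew']; exact hMw0'))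
  have heq1 : ex' = dx := by omega
  have heq2 : dx' = dx := by omega
  refine ⟨γx' / Mx', div_nonneg hγx0' hMx0'.le, (div_lt_one hMx0').mpr hγxM', ?_, ?_⟩
  · rw [show tm S x ρ dx = Mx' by rw [← heq1, hex']]
    exact ne_of_gt hMx0'
  · intro n hn
    have hbound : tm S x ρ n ≤ γx' := by
      rcases lt_or_gt_of_ne hn with h | h
      · exact hxbe' n (by omega)
      · exact hxab' n (by omega)
    rw [show tm S x ρ dx = Mx' by rw [← heq1, hex']]
    calc tm S x ρ n ≤ γx' := hbound
    _ = γx' / Mx' * Mx' := by field_simp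
    _ ≤ γx' / Mx' * Mx' := le_refl _

end WPrep
namespace WPrep

section Seq2
variable {F : Type} [Field F]

noncomputable def sseq (g : ℤ → F) (D : ℤ) : ℕ → ℤ → F
  | 0 => delta
  | (k+1) => Tdn D (conv g (sseq g D k))

noncomputable def Qpart (g : ℤ → F) (D : ℤ) (K : ℕ) (n : ℤ) : F :=
  ∑ k ∈ Finset.range (K + 1), (-1 : F) ^ k * sseq g D k n

noncomputable def cpow (s : ℤ → F) : ℕ → ℤ → F
  | 0 => delta
  | (k+1) => conv s (cpow s k)

noncomputable def Upart (s : ℤ → F) (K : ℕ) (n : ℤ) : F :=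
  ∑ k ∈ Finset.range (K + 1), cpow s k n

lemma sseq_neg (g : ℤ → F) (D : ℤ) (k : ℕ) (n : ℤ) (hn : n < 0) : sseq g D k n = 0 := by
  cases k with
  | zero => exact delta_neg n (by omega)
  | succ k => exact Tdn_neg D _ n hn

lemma cpow_neg (s : ℤ → F) (k : ℕ) (n : ℤ) (hn : n < 0) : cpow s k n = 0 := by
  cases k with
  | zero => exact delta_neg n (by omega)
  | succ k => exact conv_neg _ _ n hn

lemma Qpart_neg (g : ℤ → F) (D : ℤ) (K : ℕ) (n : ℤ) (hn : n < 0) : Qpart g D K n = 0 := by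
  unfold Qpart
  rw [Finset.sum_eq_zero]
  intro k _
  rw [sseq_neg g D k n hn, mul_zero]

lemma Upart_neg (s : ℤ → F) (K : ℕ) (n : ℤ) (hn : n < 0) : Upart s K n = 0 := by
  unfold Upart
  rw [Finset.sum_eq_zero]
  intro k _
  rw [cpow_neg s k n hn]

lemma conv_sub_left (f f' h : ℤ → F) (n : ℤ) :
    conv (fun m => f m - f' m) h n = conv f h n - conv f' h n := by
  unfold conv
  rw [← Finset.sum_sub_distrib]
  exact Finset.sum_congr rfl fun i _ => by ring

lemma Tdn_conv_Qpart (g : ℤ → F) (D : ℤ) (K : ℕ) (n : ℤ) :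
    Tdn D (conv g (Qpart g D K)) n =
      ∑ k ∈ Finset.range (K + 1), (-1 : F) ^ k * sseq g D (k + 1) n := by
  unfold Tdn
  split
  case isTrue h =>
    have h1 : conv g (Qpart g D K) (n + D) =
        ∑ k ∈ Finset.range (K + 1), (-1 : F) ^ k * conv g (sseq g D k) (n + D) := by
      unfold Qpart
      rw [conv_sum]
      exact Finset.sum_congr rfl fun k _ => conv_smul g (sseq g D k) _ (n + D)
    rw [h1]
    refine Finset.sum_congr rfl fun k _ => ?_
    congr 1
    show conv g (sseq g D k) (n + D) = Tdn D (conv g (sseq g D k)) n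
    unfold Tdn
    rw [if_pos h]
  case isFalse h =>
    symm
    rw [Finset.sum_eq_zero]
    intro k _
    rw [show sseq g D (k+1) n = Tdn D (conv g (sseq g D k)) n from rfl,
      Tdn_neg D _ n (by omega), mul_zero]

lemma Qpart_succ (g : ℤ → F) (D : ℤ) (K : ℕ) (n : ℤ) :
    Qpart g D (K + 1) n = delta n - Tdn D (conv g (Qpart g D K)) n := by
  rw [Tdn_conv_Qpart]
  unfold Qpart
  rw [Finset.sum_range_succ' (fun k => (-1 : F) ^ k * sseq g D k n) (K + 1)]
  have h0 : (-1 : F) ^ 0 * sseq g D 0 n = delta n := by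
    rw [pow_zero, one_mul]; rfl
  rw [h0, add_comm, sub_eq_add_neg, ← Finset.sum_neg_distrib]
  congr 1
  refine Finset.sum_congr rfl fun k _ => ?_
  rw [pow_succ]
  ring

lemma Upart_succ_sum (s : ℤ → F) (K : ℕ) (n : ℤ) :
    Upart s (K + 1) n = (∑ k ∈ Finset.range (K + 1), cpow s (k + 1) n) + delta n := by
  unfold Upart
  rw [Finset.sum_range_succ' (fun k => cpow s k n) (K + 1)]
  rfl

lemma conv_q_Upart (q σ : ℤ → F) (hqσ : ∀ m, q m = delta m - σ m) (K : ℕ) (n : ℤ) :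
    conv q (Upart σ K) n = delta n - cpow σ (K + 1) n := by
  have h1 : conv q (Upart σ K) n =
      conv delta (Upart σ K) n - conv σ (Upart σ K) n := by
    rw [← conv_sub_left]
    unfold conv
    exact Finset.sum_congr rfl fun i _ => by rw [hqσ i]
  rw [h1, conv_delta _ (fun m hm => Upart_neg σ K m hm)]
  have h2 : conv σ (Upart σ K) n = ∑ k ∈ Finset.range (K + 1), cpow σ (k + 1) n := by
    unfold Upart
    rw [conv_sum]
    rfl
  rw [h2]
  have h3 := Upart_succ_sum σ K n
  have h4 : Upart σ (K + 1) n = Upart σ K n + cpow σ (K + 1) n := by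
    unfold Upart
    exact Finset.sum_range_succ _ _
  have : (∑ k ∈ Finset.range (K + 1), cpow σ (k + 1) n)
      = Upart σ K n + cpow σ (K + 1) n - delta n := by
    rw [← h4, h3]; ring
  rw [this]
  ring

end Seq2

variable {p : ℕ} [Fact p.Prime] (S : AnSetting p)

lemma abv_sum_le_mul {ι : Type*} (T : Finset ι) (f : ι → S.F) (P C : ℝ) (hP : 0 < P)
    (hC : 0 ≤ C) (h : ∀ i ∈ T, S.abv (f i) * P ≤ C) : S.abv (∑ i ∈ T, f i) * P ≤ C := by
  rw [← le_div_iff₀ hP]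
  exact abv_sum_le S T f (C / P) (div_nonneg hC hP.le)
    (fun i hi => (le_div_iff₀ hP).mpr (h i hi))

lemma bnd_conv (ρ : ℝ) (h0 : 0 < ρ) (f h : ℤ → S.F) (Cf Ch : ℝ) (hCf : 0 ≤ Cf)
    (hCh : 0 ≤ Ch) (hf : ∀ n, S.abv (f n) * ρ ^ n ≤ Cf) (hh : ∀ n, S.abv (h n) * ρ ^ n ≤ Ch) :
    ∀ n, S.abv (conv f h n) * ρ ^ n ≤ Cf * Ch := by
  intro n
  unfold conv
  refine abv_sum_le_mul S _ _ _ _ (zpow_pos h0 n) (mul_nonneg hCf hCh) ?_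
  intro i _
  rw [S.abv_mul]
  have hsplit : ρ ^ n = ρ ^ i * ρ ^ (n - i) := by
    rw [← zpow_add₀ (ne_of_gt h0)]
    congr 1
    ring
  calc S.abv (f i) * S.abv (h (n - i)) * ρ ^ n
      = (S.abv (f i) * ρ ^ i) * (S.abv (h (n - i)) * ρ ^ (n - i)) := by
        rw [hsplit]; ring
  _ ≤ Cf * Ch := mul_le_mul (hf i) (hh (n - i)) (mul_nonneg (S.abv_nonneg _)
        (zpow_pos h0 _).le) hCf

lemma bnd_Tdn (ρ : ℝ) (h0 : 0 < ρ) (D : ℤ) (h : ℤ → S.F) (C : ℝ) (hC : 0 ≤ C)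
    (hh : ∀ m, S.abv (h m) * ρ ^ m ≤ C) :
    ∀ n, S.abv (Tdn D h n) * ρ ^ n ≤ C / ρ ^ D := by
  intro n
  unfold Tdn
  split
  case isTrue hn =>
    rw [le_div_iff₀ (zpow_pos h0 D)]
    calc S.abv (h (n + D)) * ρ ^ n * ρ ^ D = S.abv (h (n + D)) * ρ ^ (n + D) := by
          rw [zpow_add₀ (ne_of_gt h0)]; ring
    _ ≤ C := hh (n + D)
  case isFalse hn =>
    rw [abv_zero, zero_mul]
    exact div_nonneg hC (zpow_pos h0 D).le

lemma bnd_delta (ρ : ℝ) (h0 : 0 < ρ) : ∀ n : ℤ, S.abv (delta n) * ρ ^ n ≤ 1 := by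
  intro n
  unfold delta
  split
  case isTrue hn =>
    rw [hn, abv_one]
    simp
  case isFalse hn =>
    rw [abv_zero, zero_mul]
    exact zero_le_one

lemma bnd_sseq (ρ : ℝ) (h0 : 0 < ρ) (g : ℤ → S.F) (D : ℤ) (Θ : ℝ) (hΘ0 : 0 ≤ Θ)
    (hg : ∀ n, S.abv (g n) * ρ ^ n ≤ Θ * ρ ^ D) :
    ∀ (k : ℕ) (n : ℤ), S.abv (sseq g D k n) * ρ ^ n ≤ Θ ^ k := by
  intro k
  induction k with
  | zero => exact fun n => by simpa [sseq] using bnd_delta S ρ h0 n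
  | succ k ih =>
    intro n
    have h1 : ∀ m, S.abv (conv g (sseq g D k) m) * ρ ^ m ≤ (Θ * ρ ^ D) * Θ ^ k :=
      bnd_conv S ρ h0 g (sseq g D k) (Θ * ρ ^ D) (Θ ^ k)
        (mul_nonneg hΘ0 (zpow_pos h0 D).le) (pow_nonneg hΘ0 k) hg ih
    have h2 := bnd_Tdn S ρ h0 D (conv g (sseq g D k)) _
      (mul_nonneg (mul_nonneg hΘ0 (zpow_pos h0 D).le) (pow_nonneg hΘ0 k)) h1 n
    calc S.abv (sseq g D (k+1) n) * ρ ^ n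
        = S.abv (Tdn D (conv g (sseq g D k)) n) * ρ ^ n := rfl
    _ ≤ (Θ * ρ ^ D) * Θ ^ k / ρ ^ D := h2
    _ = Θ ^ (k + 1) := by
        field_simp
        ring

lemma abv_neg_one_pow (k : ℕ) : S.abv ((-1 : S.F) ^ k) = 1 := by
  rcases neg_one_pow_eq_or S.F k with h | h
  · rw [h, abv_one]
  · rw [h, abv_neg, abv_one]

lemma bnd_Qpart (ρ : ℝ) (h0 : 0 < ρ) (g : ℤ → S.F) (D : ℤ) (Θ : ℝ) (hΘ0 : 0 ≤ Θ)
    (hΘ1 : Θ ≤ 1) (hg : ∀ n, S.abv (g n) * ρ ^ n ≤ Θ * ρ ^ D) :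
    ∀ (K : ℕ) (n : ℤ), S.abv (Qpart g D K n) * ρ ^ n ≤ 1 := by
  intro K n
  unfold Qpart
  refine abv_sum_le_mul S _ _ _ _ (zpow_pos h0 n) zero_le_one ?_
  intro k _
  rw [S.abv_mul, abv_neg_one_pow, one_mul]
  exact le_trans (bnd_sseq S ρ h0 g D Θ hΘ0 hg k n) (pow_le_one₀ hΘ0 hΘ1)

lemma bnd_Qpart_diff (ρ : ℝ) (h0 : 0 < ρ) (g : ℤ → S.F) (D : ℤ) (Θ : ℝ) (hΘ0 : 0 ≤ Θ)
    (hΘ1 : Θ ≤ 1) (hg : ∀ n, S.abv (g n) * ρ ^ n ≤ Θ * ρ ^ D) (K K' : ℕ) (hKK' : K ≤ K') :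
    ∀ n, S.abv (Qpart g D K' n - Qpart g D K n) * ρ ^ n ≤ Θ ^ (K + 1) := by
  intro n
  have hsub : Qpart g D K' n - Qpart g D K n =
      ∑ k ∈ Finset.Ico (K + 1) (K' + 1), (-1 : S.F) ^ k * sseq g D k n := by
    rw [Finset.sum_Ico_eq_sub _ (by omega)]
    rfl
  rw [hsub]
  refine abv_sum_le_mul S _ _ _ _ (zpow_pos h0 n) (pow_nonneg hΘ0 _) ?_
  intro k hk
  rw [S.abv_mul, abv_neg_one_pow, one_mul]
  have hkK : K + 1 ≤ k := (Finset.mem_Ico.mp hk).1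
  exact le_trans (bnd_sseq S ρ h0 g D Θ hΘ0 hg k n)
    (pow_le_pow_of_le_one hΘ0 hΘ1 hkK)

lemma bnd_cpow (ρ : ℝ) (h0 : 0 < ρ) (s : ℤ → S.F) (Θ : ℝ) (hΘ0 : 0 ≤ Θ)
    (hs : ∀ n, S.abv (s n) * ρ ^ n ≤ Θ) :
    ∀ (k : ℕ) (n : ℤ), S.abv (cpow s k n) * ρ ^ n ≤ Θ ^ k := by
  intro k
  induction k with
  | zero => exact fun n => by simpa [cpow] using bnd_delta S ρ h0 n
  | succ k ih =>
    intro n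
    have := bnd_conv S ρ h0 s (cpow s k) Θ (Θ ^ k) hΘ0 (pow_nonneg hΘ0 k) hs ih n
    calc S.abv (cpow s (k+1) n) * ρ ^ n = S.abv (conv s (cpow s k) n) * ρ ^ n := rfl
    _ ≤ Θ * Θ ^ k := this
    _ = Θ ^ (k + 1) := by ring

lemma bnd_Upart_diff (ρ : ℝ) (h0 : 0 < ρ) (s : ℤ → S.F) (Θ : ℝ) (hΘ0 : 0 ≤ Θ)
    (hΘ1 : Θ ≤ 1) (hs : ∀ n, S.abv (s n) * ρ ^ n ≤ Θ) (K K' : ℕ) (hKK' : K ≤ K') :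
    ∀ n, S.abv (Upart s K' n - Upart s K n) * ρ ^ n ≤ Θ ^ (K + 1) := by
  intro n
  have hsub : Upart s K' n - Upart s K n =
      ∑ k ∈ Finset.Ico (K + 1) (K' + 1), cpow s k n := by
    rw [Finset.sum_Ico_eq_sub _ (by omega)]
    rfl
  rw [hsub]
  refine abv_sum_le_mul S _ _ _ _ (zpow_pos h0 n) (pow_nonneg hΘ0 _) ?_
  intro k hk
  have hkK : K + 1 ≤ k := (Finset.mem_Ico.mp hk).1
  exact le_trans (bnd_cpow S ρ h0 s Θ hΘ0 hs k n)
    (pow_le_pow_of_le_one hΘ0 hΘ1 hkK)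

lemma bnd_Upart (ρ : ℝ) (h0 : 0 < ρ) (s : ℤ → S.F) (Θ : ℝ) (hΘ0 : 0 ≤ Θ)
    (hΘ1 : Θ ≤ 1) (hs : ∀ n, S.abv (s n) * ρ ^ n ≤ Θ) :
    ∀ (K : ℕ) (n : ℤ), S.abv (Upart s K n) * ρ ^ n ≤ 1 := by
  intro K n
  unfold Upart
  refine abv_sum_le_mul S _ _ _ _ (zpow_pos h0 n) zero_le_one ?_
  intro k _
  exact le_trans (bnd_cpow S ρ h0 s Θ hΘ0 hs k n) (pow_le_one₀ hΘ0 hΘ1)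

end WPrep
namespace WPrep

variable {p : ℕ} [Fact p.Prime] (S : AnSetting p)

lemma coeff_mul_eq_conv (x y : S.Γac) (hx : ∀ i : ℤ, i < 0 → S.coeff x i = 0)
    (hy : ∀ i : ℤ, i < 0 → S.coeff y i = 0) (n : ℤ) :
    S.coeff (x * y) n = conv (S.coeff x) (S.coeff y) n := by
  classical
  refine sub_eq_zero.mp (eq_zero_of_abv_lt S _ ?_)
  intro ε hε
  obtain ⟨S₀, hS₀⟩ := S.coeff_mul x y n ε hε
  have h1 := hS₀ (S₀ ∪ Finset.Icc 0 n) Finset.subset_union_left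
  have h2 : ∑ i ∈ S₀ ∪ Finset.Icc 0 n, S.coeff x i * S.coeff y (n - i)
      = conv (S.coeff x) (S.coeff y) n := by
    unfold conv
    refine (Finset.sum_subset Finset.subset_union_right ?_).symm
    intro i _ hi
    rw [Finset.mem_Icc] at hi
    push_neg at hi
    rcases lt_or_ge i 0 with h | h
    · rw [hx i h, zero_mul]
    · rw [hy (n - i) (by have := hi h; omega), mul_zero]
  rwa [h2] at h1

lemma realize_seq (f : ℤ → S.F) (r₂ : ℝ) (hr₂0 : 0 ≤ r₂) (hr₂1 : r₂ < 1)
    (hbd : ∀ ρ : ℝ, r₂ < ρ → ρ < 1 → ∀ n : ℤ, S.abv (f n) * ρ ^ n ≤ 1)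
    (hneg : ∀ n : ℤ, n < 0 → f n = 0) : ∃ X, S.coeff X = f := by
  have hppos : (0:ℝ) < (p:ℝ) := lt_trans one_pos (one_lt_p (p := p))
  refine S.coeff_surjective f ?_ ?_
  · intro ε hε
    set ρ : ℝ := max ((r₂ + 1) / 2) (1 + ε)⁻¹ with hρ
    have hρ1 : ρ < 1 := by
      apply max_lt (by linarith)
      rw [inv_lt_one_iff₀]
      right; linarith
    have hρr₂ : r₂ < ρ := lt_of_lt_of_le (by linarith) (le_max_left _ _)
    have hρ0 : 0 < ρ := lt_of_lt_of_le (by linarith)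
      (le_trans (le_max_left _ _) (le_refl ρ))
    refine ⟨0, le_refl 0, fun n hn => ?_⟩
    have hb := hbd ρ hρr₂ hρ1 n
    have h1 : S.abv (f n) ≤ (ρ⁻¹) ^ n := by
      rw [inv_zpow, ← zpow_neg]
      rw [← le_div_iff₀ (zpow_pos hρ0 n)] at hb
      rwa [one_div, ← zpow_neg] at hb
    have h2 : (ρ⁻¹ : ℝ) ≤ 1 + ε := by
      rw [inv_le_comm₀ hρ0 (by linarith)]
      exact le_max_right _ _
    have h3 : (ρ⁻¹) ^ n ≤ (1 + ε) ^ n := by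
      have hn' : n = (n.toNat : ℤ) := (Int.toNat_of_nonneg hn).symm
      rw [hn', zpow_natCast, zpow_natCast]
      exact pow_le_pow_left₀ (inv_pos.mpr hρ0).le h2 n.toNat
    exact le_trans h1 h3
  · exact ⟨1, 1, one_pos, one_pos, fun n hn => by
      rw [hneg n hn, abv_zero]
      exact (Real.rpow_pos_of_pos hppos _).le⟩

lemma realize_poly (f : ℤ → S.F) (D : ℤ)
    (hsupp : ∀ n : ℤ, n < 0 ∨ D < n → f n = 0) : ∃ X, S.coeff X = f := by
  have hppos : (0:ℝ) < (p:ℝ) := lt_trans one_pos (one_lt_p (p := p))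
  refine S.coeff_surjective f ?_ ?_
  · intro ε hε
    refine ⟨max 0 (D + 1), le_max_left _ _, fun n hn => ?_⟩
    rw [hsupp n (Or.inr (by omega)), abv_zero]
    exact (zpow_pos (by linarith) n).le
  · exact ⟨1, 1, one_pos, one_pos, fun n hn => by
      rw [hsupp n (Or.inl hn), abv_zero]
      exact (Real.rpow_pos_of_pos hppos _).le⟩

end WPrep

open WPrep


/-- Suppose `x ∈ Ω_an` becomes invertible in `Γ_{an,con}`.  Then there is
a polynomial `y` with coefficients in `O[1/p]` such that `x = y · v` for some unit `v` of
`Ω_an`. -/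
theorem omegaAn_unit_factorization {p : ℕ} [Fact p.Prime] (S : AnSetting p)
    (x : S.Γac) (hxΩ : x ∈ S.omegaAnSet) (hx : IsUnit x) :
    ∃ y v : S.Γac,
      -- `y` is a polynomial (an element of `F[t] ⊆ Ω_an`)
      ({i : ℤ | S.coeff y i ≠ 0}.Finite ∧ y ∈ S.omegaAnSet) ∧
      -- `v` is a unit of `Ω_an`
      (v ∈ S.omegaAnSet ∧ ∃ w ∈ S.omegaAnSet, v * w = 1) ∧
      x = y * v := by
  classical
  obtain ⟨uu, huu⟩ := hx
  have hxw : x * (↑uu⁻¹ : S.Γac) = 1 := by rw [← huu]; exact uu.mul_inv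
  have hxΩ' : ∀ i : ℤ, i < 0 → S.coeff x i = 0 := hxΩ
  obtain ⟨D, r₂, hD0, hr₂0, hr₂1, hαne, hdom⟩ :=
    exists_dominant S x (↑uu⁻¹ : S.Γac) hxΩ' hxw
  have hαabv : S.abv (S.coeff x D) ≠ 0 := ne_of_gt (abv_pos S _ hαne)
  set g : ℤ → S.F :=
    fun n => if n < 0 ∨ n = D then 0 else (S.coeff x D)⁻¹ * S.coeff x n with hgdef
  have hgneg : ∀ n : ℤ, n < 0 → g n = 0 := fun n hn => if_pos (Or.inl hn)
  -- per-radius bound for `g`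
  have hgbd : ∀ ρ : ℝ, r₂ < ρ → ρ < 1 → ∃ Θ : ℝ, 0 ≤ Θ ∧ Θ < 1 ∧
      ∀ n : ℤ, S.abv (g n) * ρ ^ n ≤ Θ * ρ ^ D := by
    intro ρ hρ1 hρ2
    have h0ρ : 0 < ρ := lt_trans hr₂0 hρ1
    obtain ⟨Θ, hΘ0, hΘ1, hMne, hd⟩ := hdom ρ hρ1 hρ2
    refine ⟨Θ, hΘ0, hΘ1, fun n => ?_⟩
    by_cases hn : n < 0 ∨ n = D
    · have hz : g n = 0 := if_pos hn
      rw [hz, abv_zero, zero_mul]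
      exact mul_nonneg hΘ0 (zpow_pos h0ρ D).le
    · push_neg at hn
      have hgn : g n = (S.coeff x D)⁻¹ * S.coeff x n := if_neg (by push_neg; exact hn)
      have hd' := hd n hn.2
      simp only [tm] at hd'
      rw [hgn, S.abv_mul, abv_inv S _ hαne]
      calc (S.abv (S.coeff x D))⁻¹ * S.abv (S.coeff x n) * ρ ^ n
          = (S.abv (S.coeff x D))⁻¹ * (S.abv (S.coeff x n) * ρ ^ n) := by ring
      _ ≤ (S.abv (S.coeff x D))⁻¹ * (Θ * (S.abv (S.coeff x D) * ρ ^ D)) :=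
          mul_le_mul_of_nonneg_left hd' (inv_nonneg.mpr (S.abv_nonneg _))
      _ = Θ * ρ ^ D := by field_simp
  -- a fixed radius for Cauchy-ness
  set ρs : ℝ := (r₂ + 1) / 2 with hρsdef
  have hρs1 : r₂ < ρs := by rw [hρsdef]; linarith
  have hρs2 : ρs < 1 := by rw [hρsdef]; linarith
  have hρs0 : 0 < ρs := lt_trans hr₂0 hρs1
  obtain ⟨Θs, hΘs0, hΘs1, hΘsg⟩ := hgbd ρs hρs1 hρs2
  -- construction of q
  have hqex : ∀ n : ℤ, ∃ L, IsLim S (fun K => Qpart g D K n) L := by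
    intro n
    apply exists_isLim
    intro ε hε
    have hρn : (0:ℝ) < ρs ^ n := zpow_pos hρs0 n
    obtain ⟨k, hk⟩ := exists_pow_lt_of_lt_one (mul_pos hε hρn) hΘs1
    have key : ∀ A B : ℕ, k ≤ A → A ≤ B →
        S.abv (Qpart g D B n - Qpart g D A n) < ε := by
      intro A B hkA hAB
      have h1 := bnd_Qpart_diff S ρs hρs0 g D Θs hΘs0 hΘs1.le hΘsg A B hAB n
      have h2 : Θs ^ (A + 1) ≤ Θs ^ k :=
        pow_le_pow_of_le_one hΘs0 hΘs1.le (by omega)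
      have h3 : S.abv (Qpart g D B n - Qpart g D A n) * ρs ^ n < ε * ρs ^ n :=
        lt_of_le_of_lt (le_trans h1 h2) hk
      exact lt_of_mul_lt_mul_right h3 hρn.le
    refine ⟨k, fun A hA B hB => ?_⟩
    rcases le_total A B with h | h
    · rw [abv_sub_comm]; exact key A B hA h
    · exact key B A hB h
  choose q hq using hqex
  have hqneg : ∀ n : ℤ, n < 0 → q n = 0 := by
    intro n hn
    refine isLim_unique S (hq n) ?_
    have he : (fun K => Qpart g D K n) = fun _ => (0 : S.F) :=
      funext fun K => Qpart_neg g D K n hn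
    rw [he]; exact isLim_const S 0
  have hqbd : ∀ ρ : ℝ, r₂ < ρ → ρ < 1 → ∀ n, S.abv (q n) * ρ ^ n ≤ 1 := by
    intro ρ h1 h2 n
    obtain ⟨Θ, hΘ0, hΘ1, hΘg⟩ := hgbd ρ h1 h2
    have h0ρ : 0 < ρ := lt_trans hr₂0 h1
    have hbK : ∀ K, S.abv (Qpart g D K n) ≤ 1 / ρ ^ n := fun K =>
      (le_div_iff₀ (zpow_pos h0ρ n)).mpr (bnd_Qpart S ρ h0ρ g D Θ hΘ0 hΘ1.le hΘg K n)
    have := abv_le_of_isLim S hbK (hq n)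
    rwa [← le_div_iff₀ (zpow_pos h0ρ n)]
  -- the recurrence satisfied by q
  have hrec : ∀ n : ℤ, q n = delta n - Tdn D (conv g q) n := by
    intro n
    have hL : IsLim S (fun K => Qpart g D (K + 1) n) (q n) := isLim_shift S (hq n)
    refine isLim_unique S hL ?_
    have he : (fun K => Qpart g D (K + 1) n)
        = fun K => delta n - Tdn D (conv g (Qpart g D K)) n :=
      funext fun K => Qpart_succ g D K n
    rw [he]
    rcases lt_or_ge n 0 with hn | hn
    · have he2 : (fun K => delta n - Tdn D (conv g (Qpart g D K)) n)
          = fun _ => delta n - Tdn D (conv g q) n := by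
        funext K
        rw [Tdn_neg D (conv g (Qpart g D K)) n hn, Tdn_neg D (conv g q) n hn]
      rw [he2]; exact isLim_const S _
    · have hTq : Tdn D (conv g q) n = ∑ i ∈ Finset.Icc 0 (n + D), g i * q (n + D - i) := by
        simp only [Tdn, if_pos hn]; rfl
      have hTK : ∀ K, Tdn D (conv g (Qpart g D K)) n
          = ∑ i ∈ Finset.Icc 0 (n + D), g i * Qpart g D K (n + D - i) := by
        intro K
        simp only [Tdn, if_pos hn]; rfl
      have hsum : IsLim S
          (fun K => ∑ i ∈ Finset.Icc 0 (n + D), g i * Qpart g D K (n + D - i))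
          (∑ i ∈ Finset.Icc 0 (n + D), g i * q (n + D - i)) :=
        isLim_finsetSum S _ _ _ (fun i _ => isLim_mul_const S (g i) (hq (n + D - i)))
      have hfin := isLim_add S (isLim_const S (delta n)) (isLim_neg S hsum)
      have he3 : (fun K => delta n - Tdn D (conv g (Qpart g D K)) n)
          = fun K => delta n + -(∑ i ∈ Finset.Icc 0 (n + D), g i * Qpart g D K (n + D - i)) := by
        funext K; rw [hTK K]; ring
      rw [he3, hTq, sub_eq_add_neg]
      exact hfin
  -- σ and u
  set σ : ℤ → S.F := fun m => delta m - q m with hσdef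
  have hqσ : ∀ m, q m = delta m - σ m := fun m => by
    show q m = delta m - (delta m - q m); ring
  have hσT : ∀ m, σ m = Tdn D (conv g q) m := fun m => by
    show delta m - q m = Tdn D (conv g q) m
    rw [hrec m]; ring
  have hσbd : ∀ ρ : ℝ, r₂ < ρ → ρ < 1 → ∃ Θ : ℝ, 0 ≤ Θ ∧ Θ < 1 ∧
      ∀ m, S.abv (σ m) * ρ ^ m ≤ Θ := by
    intro ρ h1 h2
    obtain ⟨Θ, hΘ0, hΘ1, hΘg⟩ := hgbd ρ h1 h2
    have h0ρ : 0 < ρ := lt_trans hr₂0 h1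
    refine ⟨Θ, hΘ0, hΘ1, fun m => ?_⟩
    have hconv := bnd_conv S ρ h0ρ g q (Θ * ρ ^ D) 1
      (mul_nonneg hΘ0 (zpow_pos h0ρ D).le) zero_le_one hΘg (hqbd ρ h1 h2)
    have hT := bnd_Tdn S ρ h0ρ D (conv g q) (Θ * ρ ^ D * 1)
      (by positivity) hconv m
    rw [hσT m]
    calc S.abv (Tdn D (conv g q) m) * ρ ^ m ≤ Θ * ρ ^ D * 1 / ρ ^ D := hT
    _ = Θ := by field_simp
  obtain ⟨Θt, hΘt0, hΘt1, hΘtσ⟩ := hσbd ρs hρs1 hρs2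
  have huex : ∀ n : ℤ, ∃ L, IsLim S (fun K => Upart σ K n) L := by
    intro n
    apply exists_isLim
    intro ε hε
    have hρn : (0:ℝ) < ρs ^ n := zpow_pos hρs0 n
    obtain ⟨k, hk⟩ := exists_pow_lt_of_lt_one (mul_pos hε hρn) hΘt1
    have key : ∀ A B : ℕ, k ≤ A → A ≤ B →
        S.abv (Upart σ B n - Upart σ A n) < ε := by
      intro A B hkA hAB
      have h1 := bnd_Upart_diff S ρs hρs0 σ Θt hΘt0 hΘt1.le hΘtσ A B hAB n
      have h2 : Θt ^ (A + 1) ≤ Θt ^ k :=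
        pow_le_pow_of_le_one hΘt0 hΘt1.le (by omega)
      have h3 : S.abv (Upart σ B n - Upart σ A n) * ρs ^ n < ε * ρs ^ n :=
        lt_of_le_of_lt (le_trans h1 h2) hk
      exact lt_of_mul_lt_mul_right h3 hρn.le
    refine ⟨k, fun A hA B hB => ?_⟩
    rcases le_total A B with h | h
    · rw [abv_sub_comm]; exact key A B hA h
    · exact key B A hB h
  choose u hu using huex
  have huneg : ∀ n : ℤ, n < 0 → u n = 0 := by
    intro n hn
    refine isLim_unique S (hu n) ?_
    have he : (fun K => Upart σ K n) = fun _ => (0 : S.F) :=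
      funext fun K => Upart_neg σ K n hn
    rw [he]; exact isLim_const S 0
  have hubd : ∀ ρ : ℝ, r₂ < ρ → ρ < 1 → ∀ n, S.abv (u n) * ρ ^ n ≤ 1 := by
    intro ρ h1 h2 n
    obtain ⟨Θ, hΘ0, hΘ1, hΘg⟩ := hσbd ρ h1 h2
    have h0ρ : 0 < ρ := lt_trans hr₂0 h1
    have hbK : ∀ K, S.abv (Upart σ K n) ≤ 1 / ρ ^ n := fun K =>
      (le_div_iff₀ (zpow_pos h0ρ n)).mpr (bnd_Upart S ρ h0ρ σ Θ hΘ0 hΘ1.le hΘg K n)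
    have := abv_le_of_isLim S hbK (hu n)
    rwa [← le_div_iff₀ (zpow_pos h0ρ n)]
  -- q * u = 1 at the level of sequences
  have hqu : ∀ n : ℤ, conv q u n = delta n := by
    intro n
    have hL : IsLim S (fun K => conv q (Upart σ K) n) (conv q u n) := by
      have h1 : IsLim S (fun K => ∑ i ∈ Finset.Icc 0 n, q i * Upart σ K (n - i))
          (∑ i ∈ Finset.Icc 0 n, q i * u (n - i)) :=
        isLim_finsetSum S _ _ _ (fun i _ => isLim_mul_const S (q i) (hu (n - i)))
      exact h1
    have hR : IsLim S (fun K => conv q (Upart σ K) n) (delta n) := by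
      have he : (fun K => conv q (Upart σ K) n)
          = fun K => delta n + -(cpow σ (K + 1) n) :=
        funext fun K => by rw [conv_q_Upart q σ hqσ K n]; ring
      rw [he]
      have hcp : IsLim S (fun K => cpow σ (K + 1) n) 0 := by
        refine isLim_zero_of_bound S (Θt / ρs ^ n) Θt hΘt0 hΘt1
          (div_nonneg hΘt0 (zpow_pos hρs0 n).le) ?_
        intro K
        have h1 := bnd_cpow S ρs hρs0 σ Θt hΘt0 hΘtσ (K + 1) n
        calc S.abv (cpow σ (K + 1) n) ≤ Θt ^ (K + 1) / ρs ^ n :=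
              (le_div_iff₀ (zpow_pos hρs0 n)).mpr h1
        _ = Θt / ρs ^ n * Θt ^ K := by rw [pow_succ]; ring
      have hfin := isLim_add S (isLim_const S (delta n)) (isLim_neg S hcp)
      simpa only [neg_zero, add_zero] using hfin
    exact isLim_unique S hL hR
  -- support of conv (coeff x) q
  have hsplit : ∀ n : ℤ, 0 ≤ n → conv (S.coeff x) q n
      = S.coeff x D * conv g q n + (if D ≤ n then S.coeff x D * q (n - D) else 0) := by
    intro n hn
    have hterm : ∀ i ∈ Finset.Icc (0:ℤ) n, S.coeff x i * q (n - i)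
        = S.coeff x D * (g i * q (n - i)) + (if i = D then S.coeff x D * q (n - D) else 0) := by
      intro i hi
      rw [Finset.mem_Icc] at hi
      by_cases hiD : i = D
      · subst hiD
        have hz : g i = 0 := if_pos (Or.inr rfl)
        rw [hz, if_pos rfl]
        ring
      · have hg0 : g i = (S.coeff x D)⁻¹ * S.coeff x i :=
          if_neg (by push_neg; exact ⟨by omega, hiD⟩)
        rw [hg0, if_neg hiD, add_zero]
        field_simp
      
    show (∑ i ∈ Finset.Icc 0 n, S.coeff x i * q (n - i)) = _
    rw [Finset.sum_congr rfl hterm, Finset.sum_add_distrib, ← Finset.mul_sum,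
      Finset.sum_ite_eq' (Finset.Icc 0 n) D (fun _ => S.coeff x D * q (n - D))]
    congr 1
    exact if_congr (by rw [Finset.mem_Icc]; omega) rfl rfl
  have hY0 : ∀ n : ℤ, D < n → conv (S.coeff x) q n = 0 := by
    intro n hn
    have h0n : (0:ℤ) ≤ n := by omega
    rw [hsplit n h0n, if_pos (by omega)]
    have hqnD := hrec (n - D)
    have hT : Tdn D (conv g q) (n - D) = conv g q n := by
      simp only [Tdn, if_pos (show (0:ℤ) ≤ n - D by omega)]
      congr 1
      omega
    rw [hT, delta_neg (n - D) (by omega)] at hqnD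
    rw [hqnD]
    ring
  -- realizations in Γac
  obtain ⟨Q, hQ⟩ := realize_seq S q r₂ hr₂0.le hr₂1 hqbd hqneg
  obtain ⟨U, hU⟩ := realize_seq S u r₂ hr₂0.le hr₂1 hubd huneg
  obtain ⟨Y, hY⟩ := realize_poly S (fun n => conv (S.coeff x) q n) D
    (fun n hn => hn.elim (conv_neg (S.coeff x) q n) (hY0 n))
  have hQneg : ∀ i : ℤ, i < 0 → S.coeff Q i = 0 := fun i hi => by
    rw [hQ]; exact hqneg i hi
  have hUneg : ∀ i : ℤ, i < 0 → S.coeff U i = 0 := fun i hi => by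
    rw [hU]; exact huneg i hi
  have hxQ : x * Q = Y := by
    apply S.coeff_injective
    funext n
    rw [coeff_mul_eq_conv S x Q hxΩ' hQneg n, hQ, hY]
  have hQU : Q * U = 1 := by
    apply S.coeff_injective
    funext n
    rw [coeff_mul_eq_conv S Q U hQneg hUneg n, hQ, hU, S.coeff_one, hqu n]
    rfl
  have hfinal : x = Y * U := by
    calc x = x * (Q * U) := by rw [hQU, mul_one]
    _ = (x * Q) * U := by ring
    _ = Y * U := by rw [hxQ]
  refine ⟨Y, U, ⟨?_, ?_⟩, ⟨?_, Q, ?_, ?_⟩, hfinal⟩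
  · refine Set.Finite.subset (Finset.Icc (0:ℤ) D).finite_toSet ?_
    intro i hi
    simp only [Set.mem_setOf_eq] at hi
    rw [hY] at hi
    simp only [Finset.coe_Icc, Set.mem_Icc]
    constructor
    · by_contra h
      exact hi (conv_neg (S.coeff x) q i (by omega))
    · by_contra h
      exact hi (hY0 i (by omega))
  · intro i hi
    rw [hY]
    exact conv_neg (S.coeff x) q i hi
  · intro i hi
    rw [hU]
    exact huneg i hi
  · intro i hi
    rw [hQ]
    exact hqneg i hi
  · rw [mul_comm]
    exact hQU
end

section
/- Let τ : K^imm → Γ^imm denote the Teichmüller map, ν the valuation on K^imm normalized so that a uniformizer of K = k((t)) has valuation 1, and m the integer with |π| = p^{-1/m}. If x = Σ_{a=0}^∞ π^a τ(d_a) with d_a ∈ K^imm, then for every n ≥ 1, the smallest rational number j such that the coefficient c_j of u^j in the expansion x = Σ_{i∈ℚ} c_i u^i satisfies |c_j| > p^{-n/m} (equivalently, c_j ≢ 0 mod π^n) equals min{ν(d_0), …, ν(d_{n−1})}. -/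
open scoped Classical

/-- The setting for `Γ^imm`.  `O` is a complete discrete valuation ring, finite and
totally ramified over the Witt vectors of an algebraically closed field `k` of
characteristic `p` (with residue map `redO : O → k`); `K^imm` is the field of generalized
power series over `k` with exponents in `ℚ` and well-ordered support (`HahnSeries ℚ k`);
`Γ^imm = W(K^imm) ⊗_W O` is encoded as the ring of generalized series `∑_{i ∈ ℚ} cᵢ uⁱ`
(`cᵢ ∈ O`) such that for each `ε > 0` the set `{i | |cᵢ| ≥ p^{-ε}}` is well-ordered, via
its coefficient functionals; `τ` is the Teichmüller map, the unique multiplicative lift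
admitting `p^n`-th roots for all `n`. -/
structure ImmSetting (p : ℕ) [Fact p.Prime] where
  k : Type
  [fieldk : Field k]
  [algk : IsAlgClosed k]
  [chark : CharP k p]
  O : Type
  [commO : CommRing O]
  [domO : IsDomain O]
  [dvrO : IsDiscreteValuationRing O]
  abv : O → ℝ
  abv_nonneg : ∀ x, 0 ≤ abv x
  abv_eq_zero : ∀ x, abv x = 0 ↔ x = 0
  abv_mul : ∀ x y, abv (x * y) = abv x * abv y
  abv_add_le : ∀ x y, abv (x + y) ≤ max (abv x) (abv y)
  abv_le_one : ∀ x, abv x ≤ 1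
  abv_p : abv (p : O) = (p : ℝ)⁻¹
  m : ℕ
  m_pos : 0 < m
  abv_discrete : ∀ x : O, x ≠ 0 → ∃ n : ℕ, abv x = (p : ℝ) ^ (-(n : ℝ) / (m : ℝ))
  complete : ∀ f : ℕ → O,
    (∀ ε : ℝ, 0 < ε → ∃ N, ∀ a ≥ N, ∀ b ≥ N, abv (f a - f b) < ε) →
    ∃ x : O, ∀ ε : ℝ, 0 < ε → ∃ N, ∀ a ≥ N, abv (f a - x) < ε
  redO : O →+* k
  redO_surjective : Function.Surjective redO
  redO_ker : ∀ x : O, redO x = 0 ↔ abv x < 1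
  Γimm : Type
  [commI : CommRing Γimm]
  coeff : Γimm → ℚ → O
  coeff_injective : Function.Injective coeff
  coeff_add : ∀ x y i, coeff (x + y) i = coeff x i + coeff y i
  coeff_support : ∀ (x : Γimm) (ε : ℝ), 0 < ε →
    {i : ℚ | (p : ℝ) ^ (-ε) ≤ abv (coeff x i)}.IsWF
  coeff_surjective : ∀ f : ℚ → O,
    (∀ ε : ℝ, 0 < ε → {i : ℚ | (p : ℝ) ^ (-ε) ≤ abv (f i)}.IsWF) → ∃ x, coeff x = f
  coeff_one : ∀ i, coeff 1 i = if i = 0 then 1 else 0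
  const : O →+* Γimm
  coeff_const : ∀ a i, coeff (const a) i = if i = 0 then a else 0
  coeff_mul : ∀ (x y : Γimm) (n : ℚ) (ε : ℝ), 0 < ε →
    ∃ T₀ : Finset ℚ, ∀ T : Finset ℚ, T₀ ⊆ T →
      abv (coeff (x * y) n - ∑ i ∈ T, coeff x i * coeff y (n - i)) < ε
  τ : HahnSeries ℚ k → Γimm
  τ_mul : ∀ a b, τ (a * b) = τ a * τ b
  τ_red : ∀ a i, redO (coeff (τ a) i) = a.coeff i
  τ_roots : ∀ (a : HahnSeries ℚ k) (n : ℕ), ∃ y : Γimm, y ^ (p ^ n) = τ a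

attribute [instance] ImmSetting.fieldk ImmSetting.algk ImmSetting.chark
  ImmSetting.commO ImmSetting.domO ImmSetting.dvrO ImmSetting.commI

namespace ImmSetting

variable {p : ℕ} [Fact p.Prime] (S : ImmSetting p)

/-- The coefficient functional as an additive monoid hom. -/
def coeffHom (i : ℚ) : S.Γimm →+ S.O where
  toFun x := S.coeff x i
  map_zero' := by
    have h := S.coeff_add 0 0 i
    rw [add_zero] at h
    exact (left_eq_add.mp h)
  map_add' x y := S.coeff_add x y i

lemma coeff_zero (i : ℚ) : S.coeff 0 i = 0 := (S.coeffHom i).map_zero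

lemma coeff_sub (x y : S.Γimm) (i : ℚ) :
    S.coeff (x - y) i = S.coeff x i - S.coeff y i := (S.coeffHom i).map_sub x y

lemma coeff_sum {α : Type*} (s : Finset α) (f : α → S.Γimm) (i : ℚ) :
    S.coeff (∑ a ∈ s, f a) i = ∑ a ∈ s, S.coeff (f a) i :=
  map_sum (S.coeffHom i) f s

lemma abv_lt_of_forall (c : S.O) (h : ∀ ε : ℝ, 0 < ε → S.abv c < ε) : c = 0 := by
  by_contra hc
  have h0 : 0 < S.abv c :=
    lt_of_le_of_ne (S.abv_nonneg c) (fun e => hc ((S.abv_eq_zero c).mp e.symm))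
  exact lt_irrefl _ (h _ h0)

lemma coeff_constMul (a : S.O) (y : S.Γimm) (i : ℚ) :
    S.coeff (S.const a * y) i = a * S.coeff y i := by
  have key : ∀ ε : ℝ, 0 < ε → S.abv (S.coeff (S.const a * y) i - a * S.coeff y i) < ε := by
    intro ε hε
    obtain ⟨T₀, hT⟩ := S.coeff_mul (S.const a) y i ε hε
    have h1 := hT (insert 0 T₀) (Finset.subset_insert _ _)
    have h2 : ∑ j ∈ insert 0 T₀, S.coeff (S.const a) j * S.coeff y (i - j)
        = a * S.coeff y i := by
      rw [Finset.sum_eq_single_of_mem 0 (Finset.mem_insert_self _ _)]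
      · rw [S.coeff_const, if_pos rfl, sub_zero]
      · intro b _ hb
        rw [S.coeff_const, if_neg hb, zero_mul]
    rwa [h2] at h1
  exact sub_eq_zero.mp (S.abv_lt_of_forall _ key)
variable {π : S.O}

lemma abv_one : S.abv 1 = 1 := by
  have h := S.abv_mul 1 1
  rw [mul_one] at h
  have h1 : S.abv 1 ≠ 0 := fun e => one_ne_zero ((S.abv_eq_zero 1).mp e)
  have := mul_left_cancel₀ h1 (h.symm.trans (mul_one _).symm)
  linarith [this]

lemma abv_isUnit {u : S.O} (hu : IsUnit u) : S.abv u = 1 := by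
  obtain ⟨v, hv⟩ := hu.exists_right_inv
  have h := S.abv_mul u v
  rw [hv, S.abv_one] at h
  have h1 := S.abv_le_one u
  have h2 := S.abv_le_one v
  have h3 := S.abv_nonneg u
  have h4 := S.abv_nonneg v
  nlinarith

lemma isUnit_of_abv_eq_one {c : S.O} (hc : S.abv c = 1) : IsUnit c := by
  have hred : S.redO c ≠ 0 := by
    intro h
    have := (S.redO_ker c).mp h
    rw [hc] at this
    exact lt_irrefl _ this
  obtain ⟨b, hb⟩ := S.redO_surjective (S.redO c)⁻¹
  have hcb : S.redO (c * b - 1) = 0 := by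
    rw [map_sub, map_mul, map_one, hb, mul_inv_cancel₀ hred, sub_self]
  have habv : S.abv (c * b - 1) < 1 := (S.redO_ker _).mp hcb
  have hnon : ¬ IsUnit (c * b - 1) := by
    intro h
    rw [S.abv_isUnit h] at habv
    exact lt_irrefl _ habv
  have hcbu : IsUnit (c * b) := by
    by_contra hcb'
    have h1 : c * b ∈ IsLocalRing.maximalIdeal S.O :=
      (IsLocalRing.mem_maximalIdeal _).mpr (mem_nonunits_iff.mpr hcb')
    have h2 : c * b - 1 ∈ IsLocalRing.maximalIdeal S.O :=
      (IsLocalRing.mem_maximalIdeal _).mpr (mem_nonunits_iff.mpr hnon)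
    have h3 : (1 : S.O) ∈ IsLocalRing.maximalIdeal S.O := by
      have := Ideal.sub_mem _ h1 h2
      simp only [sub_sub_cancel] at this
      exact this
    exact (Ideal.ne_top_iff_one _).mp (Ideal.IsMaximal.ne_top inferInstance) h3
  exact isUnit_of_mul_isUnit_left hcbu

lemma abv_lt_one_iff (c : S.O) : S.abv c < 1 ↔ ¬ IsUnit c := by
  constructor
  · intro h hu
    rw [S.abv_isUnit hu] at h
    exact lt_irrefl _ h
  · intro h
    rcases lt_or_eq_of_le (S.abv_le_one c) with h1 | h1
    · exact h1
    · exact absurd (S.isUnit_of_abv_eq_one h1) h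

lemma dvd_iff_red (hπ : Irreducible π) (c : S.O) : π ∣ c ↔ S.redO c = 0 := by
  rw [S.redO_ker, S.abv_lt_one_iff]
  constructor
  · intro ⟨e, he⟩ hu
    exact hπ.not_isUnit (isUnit_of_mul_isUnit_left (he ▸ hu))
  · intro h
    have h1 : c ∈ IsLocalRing.maximalIdeal S.O := (IsLocalRing.mem_maximalIdeal _).mpr (mem_nonunits_iff.mpr h)
    rw [hπ.maximalIdeal_eq, Ideal.mem_span_singleton] at h1
    exact h1

lemma pi_dvd_p (hπ : Irreducible π) : π ∣ (p : S.O) := by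
  rw [S.dvd_iff_red hπ, S.redO_ker, S.abv_p]
  have hp2 : (2 : ℝ) ≤ (p : ℝ) := by exact_mod_cast (Fact.out : p.Prime).two_le
  rw [inv_lt_one_iff₀]
  right; linarith

lemma abv_pi_ge (hπ : Irreducible π) : (p : ℝ)⁻¹ ≤ S.abv π := by
  obtain ⟨c, hc⟩ := S.pi_dvd_p hπ
  have h := S.abv_mul π c
  rw [← hc, S.abv_p] at h
  have h1 := S.abv_le_one c
  have h2 := S.abv_nonneg π
  nlinarith

lemma abv_pow (x : S.O) (r : ℕ) : S.abv (x ^ r) = S.abv x ^ r := by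
  induction r with
  | zero => simpa using S.abv_one
  | succ n ih => rw [pow_succ, pow_succ, S.abv_mul, ih]

lemma rpow_aux' {p : ℕ} [Fact p.Prime] (r : ℕ) (ε : ℝ) : (p : ℝ) ^ (-(ε + r)) = (p : ℝ) ^ (-ε) * ((p:ℝ)⁻¹) ^ r := by
  have hp : (0 : ℝ) < p := by exact_mod_cast (Fact.out : p.Prime).pos
  rw [neg_add, Real.rpow_add hp, inv_pow, ← Real.rpow_natCast (p:ℝ) r, ← Real.rpow_neg hp.le]

lemma const_pow_dvd_iff (hπ : Irreducible π) (r : ℕ) (a : S.Γimm) :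
    S.const (π ^ r) ∣ a ↔ ∀ i, π ^ r ∣ S.coeff a i := by
  constructor
  · rintro ⟨w, rfl⟩ i
    rw [S.coeff_constMul]
    exact Dvd.intro _ rfl
  · intro h
    have hf : ∀ i, ∃ c, S.coeff a i = π ^ r * c := fun i => (h i).elim fun c hc => ⟨c, hc⟩
    choose f hf using hf
    have hp : (0 : ℝ) < p := by exact_mod_cast (Fact.out : p.Prime).pos
    have hsupp : ∀ ε : ℝ, 0 < ε → {i : ℚ | (p : ℝ) ^ (-ε) ≤ S.abv (f i)}.IsWF := by
      intro ε hε
      apply (S.coeff_support a (ε + r) (by positivity)).mono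
      intro i hi
      simp only [Set.mem_setOf_eq] at hi ⊢
      rw [hf i, S.abv_mul, rpow_aux' (p := p) r ε]
      have h1 : ((p:ℝ)⁻¹) ^ r ≤ S.abv (π ^ r) := by
        rw [S.abv_pow]
        exact pow_le_pow_left₀ (by positivity) (S.abv_pi_ge hπ) r
      have h2 : (0:ℝ) < (p : ℝ) ^ (-ε) := Real.rpow_pos_of_pos hp _
      have h3 := S.abv_nonneg (f i)
      nlinarith [pow_pos (inv_pos.mpr hp) r]
    obtain ⟨w, hw⟩ := S.coeff_surjective f hsupp
    exact ⟨w, S.coeff_injective (funext fun i => by rw [S.coeff_constMul, hw, hf])⟩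

/-- Lower bounds on supports. -/
lemma suppGe_mul {a b : S.Γimm} {α β : ℚ} (ha : ∀ i < α, S.coeff a i = 0)
    (hb : ∀ i < β, S.coeff b i = 0) : ∀ j < α + β, S.coeff (a * b) j = 0 := by
  intro j hj
  apply S.abv_lt_of_forall
  intro ε hε
  obtain ⟨T₀, hT⟩ := S.coeff_mul a b j ε hε
  have h1 := hT T₀ subset_rfl
  have h2 : ∑ i ∈ T₀, S.coeff a i * S.coeff b (j - i) = 0 := by
    apply Finset.sum_eq_zero
    intro i _
    by_cases hi : i < α
    · rw [ha i hi, zero_mul]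
    · rw [hb (j - i) (by push_neg at hi; linarith), mul_zero]
  rwa [h2, sub_zero] at h1

lemma suppGe_pow {a : S.Γimm} {α : ℚ} (ha : ∀ i < α, S.coeff a i = 0) (M : ℕ) :
    ∀ j < (M : ℚ) * α, S.coeff (a ^ M) j = 0 := by
  induction M with
  | zero =>
    intro j hj
    rw [pow_zero, S.coeff_one, if_neg]
    intro h; rw [h] at hj; simp at hj
  | succ n ih =>
    intro j hj
    rw [pow_succ]
    refine S.suppGe_mul ih ha j ?_
    push_cast at hj ⊢
    linarith

/-- The coefficientwise reduction of an element of `Γimm`, as a Hahn series over `k`. -/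
def redFun (y : S.Γimm) : HahnSeries ℚ S.k where
  coeff i := S.redO (S.coeff y i)
  isPWO_support' := by
    have hp : (0 : ℝ) < p := by exact_mod_cast (Fact.out : p.Prime).pos
    apply Set.IsWF.isPWO
    apply (S.coeff_support y 1 one_pos).mono
    intro i hi
    simp only [Function.mem_support, Set.mem_setOf_eq] at hi ⊢
    have h1 : ¬ S.abv (S.coeff y i) < 1 := fun h => hi ((S.redO_ker _).mpr h)
    push_neg at h1
    calc (p:ℝ) ^ (-1 : ℝ) ≤ 1 := by
          rw [Real.rpow_neg_one]
          rw [inv_le_one_iff₀]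
          right
          exact_mod_cast (Fact.out : p.Prime).one_lt.le
      _ ≤ S.abv (S.coeff y i) := h1

@[simp] lemma redFun_coeff (y : S.Γimm) (i : ℚ) :
    (S.redFun y).coeff i = S.redO (S.coeff y i) := rfl

lemma redFun_mul (x y : S.Γimm) : S.redFun (x * y) = S.redFun x * S.redFun y := by
  ext n
  rw [HahnSeries.coeff_mul]
  set A := S.redFun x with hA
  set B := S.redFun y with hB
  set Fin2 := Finset.antidiagonal A.isPWO_support B.isPWO_support n with hFin2
  set F := Fin2.image Prod.fst with hF
  obtain ⟨T₀, hT⟩ := S.coeff_mul x y n 1 one_pos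
  have h1 := hT (T₀ ∪ F) Finset.subset_union_left
  have h2 : S.redO (S.coeff (x * y) n - ∑ i ∈ T₀ ∪ F, S.coeff x i * S.coeff y (n - i)) = 0 :=
    (S.redO_ker _).mpr h1
  rw [map_sub, sub_eq_zero] at h2
  rw [redFun_coeff, h2, map_sum]
  have h3 : ∀ i ∈ T₀ ∪ F, S.redO (S.coeff x i * S.coeff y (n - i))
      = A.coeff i * B.coeff (n - i) := by
    intro i _
    rw [map_mul]; rfl
  rw [Finset.sum_congr rfl h3]
  have h4 : ∑ i ∈ T₀ ∪ F, A.coeff i * B.coeff (n - i)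
      = ∑ i ∈ F, A.coeff i * B.coeff (n - i) := by
    refine (Finset.sum_subset Finset.subset_union_right ?_).symm
    intro i _ hiF
    by_contra hne
    have hA0 : A.coeff i ≠ 0 := fun h => hne (by rw [h, zero_mul])
    have hB0 : B.coeff (n - i) ≠ 0 := fun h => hne (by rw [h, mul_zero])
    apply hiF
    rw [hF, Finset.mem_image]
    refine ⟨(i, n - i), ?_, rfl⟩
    rw [hFin2, Finset.mem_antidiagonal]
    exact ⟨hA0, hB0, by ring⟩
  rw [h4]
  rw [hF, Finset.sum_image ?hinj]
  case hinj =>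
    intro a ha b hb hab
    rw [hFin2, Finset.mem_coe, Finset.mem_antidiagonal] at ha hb
    have : a.2 = b.2 := by
      have h5 := ha.2.2; have h6 := hb.2.2
      rw [← hab] at h6
      linarith
    exact Prod.ext hab this
  apply Finset.sum_congr rfl
  intro ij hij
  rw [hFin2, Finset.mem_antidiagonal] at hij
  have : n - ij.1 = ij.2 := by have := hij.2.2; linarith
  rw [this]

/-- Coefficientwise reduction as a ring homomorphism `Γimm →+* HahnSeries ℚ k`. -/
def redS : S.Γimm →+* HahnSeries ℚ S.k where
  toFun := S.redFun
  map_one' := by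
    ext i
    rw [redFun_coeff, S.coeff_one, HahnSeries.coeff_one]
    split <;> simp
  map_mul' := S.redFun_mul
  map_zero' := by
    ext i
    rw [redFun_coeff, S.coeff_zero, map_zero, HahnSeries.coeff_zero]
  map_add' x y := by
    ext i
    simp [S.coeff_add, HahnSeries.coeff_add]

@[simp] lemma redS_coeff (y : S.Γimm) (i : ℚ) :
    (S.redS y).coeff i = S.redO (S.coeff y i) := rfl

lemma redS_tau (d : HahnSeries ℚ S.k) : S.redS (S.τ d) = d := by
  ext i
  rw [redS_coeff, S.τ_red]

lemma pow_sub_pow_aux {R : Type*} [CommRing R] (x y : R) (P : ℕ) :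
    ∃ w : R, x ^ P - y ^ P = (x - y) * x ^ (P - 1) * P + (x - y) ^ 2 * w := by
  have hg := geom_sum₂_mul x y P
  have hd : (x - y) ∣ ((∑ i ∈ Finset.range P, x ^ i * y ^ (P - 1 - i)) - P * x ^ (P - 1)) := by
    have hsum : (∑ i ∈ Finset.range P, x ^ i * y ^ (P - 1 - i)) - P * x ^ (P - 1)
        = ∑ i ∈ Finset.range P, (x ^ i * y ^ (P - 1 - i) - x ^ (P - 1)) := by
      rw [Finset.sum_sub_distrib, Finset.sum_const, Finset.card_range, nsmul_eq_mul]
    rw [hsum]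
    apply Finset.dvd_sum
    intro i hi
    rw [Finset.mem_range] at hi
    have hip : x ^ (P - 1) = x ^ i * x ^ (P - 1 - i) := by
      rw [← pow_add]
      congr 1
      omega
    rw [hip, ← mul_sub]
    apply Dvd.dvd.mul_left
    have := sub_dvd_pow_sub_pow y x (P - 1 - i)
    rw [show x - y = -(y - x) by ring]
    exact (neg_dvd).mpr this
  obtain ⟨w, hw⟩ := hd
  exact ⟨w, by linear_combination (x - y) * hw - hg⟩

lemma step_dvd (hπ : Irreducible π) (r : ℕ) (hr : 1 ≤ r) (a b : S.Γimm)
    (h : S.const (π ^ r) ∣ a - b) : S.const (π ^ (r + 1)) ∣ a ^ p - b ^ p := by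
  obtain ⟨u, hu⟩ := h
  obtain ⟨w, hw⟩ := pow_sub_pow_aux a b p
  obtain ⟨c, hc⟩ := S.pi_dvd_p hπ
  have hp' : (p : S.Γimm) = S.const (p : S.O) := by rw [map_natCast]
  rw [hw]
  apply dvd_add
  · have h1 : S.const (π ^ (r + 1)) ∣ (a - b) * (p : S.Γimm) := by
      rw [hu, hp', hc, pow_succ, map_mul, map_mul]
      exact ⟨u * S.const c, by ring⟩
    have h2 := h1.mul_right (a ^ (p - 1))
    rwa [mul_right_comm] at h2
  · refine Dvd.dvd.mul_right ?_ w
    rw [hu, mul_pow, ← map_pow, ← pow_mul]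
    refine Dvd.dvd.mul_right ?_ (u ^ 2)
    apply map_dvd
    exact pow_dvd_pow π (by omega)

lemma iter_dvd (hπ : Irreducible π) (N : ℕ) (a b : S.Γimm)
    (h : S.const π ∣ a - b) : S.const (π ^ (N + 1)) ∣ a ^ (p ^ N) - b ^ (p ^ N) := by
  induction N with
  | zero =>
    simpa using h
  | succ n ih =>
    have := S.step_dvd hπ (n + 1) (by omega) (a ^ (p ^ n)) (b ^ (p ^ n)) ih
    rw [pow_succ p n, pow_mul, pow_mul]
    exact this

lemma tau_coeff_dvd (hπ : Irreducible π) (n : ℕ) (d : HahnSeries ℚ S.k) (j : ℚ)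
    (hj : (j : WithTop ℚ) < d.orderTop) : π ^ n ∣ S.coeff (S.τ d) j := by
  obtain ⟨y, hy⟩ := S.τ_roots d n
  have hpn : p ^ n ≠ 0 := pow_ne_zero n (Fact.out : p.Prime).pos.ne'
  have hred : (S.redS y) ^ (p ^ n) = d := by rw [← map_pow, hy, S.redS_tau]
  by_cases hd : d = 0
  · subst hd
    have hY0 : S.redS y = 0 := by
      have := pow_eq_zero_iff hpn |>.mp hred
      exact this
    have h1 : S.const (π ^ 1) ∣ y := by
      rw [S.const_pow_dvd_iff hπ]
      intro i
      rw [pow_one, S.dvd_iff_red hπ]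
      have : (S.redS y).coeff i = 0 := by rw [hY0]; exact HahnSeries.coeff_zero
      rwa [S.redS_coeff] at this
    rw [pow_one] at h1
    have h2 := S.iter_dvd hπ n y 0 (by simpa using h1)
    rw [hy, zero_pow hpn, sub_zero] at h2
    have h3 := (S.const_pow_dvd_iff hπ (n + 1) _).mp h2 j
    exact dvd_trans (pow_dvd_pow π (by omega)) h3
  · have hY : S.redS y ≠ 0 := by
      intro h
      rw [h, zero_pow hpn] at hred
      exact hd hred.symm
    set α := (S.redS y).order with hα
    have horder : d.order = (p ^ n : ℚ) * α := by
      rw [← hred, HahnSeries.order_pow, nsmul_eq_mul]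
      push_cast
      ring
    have hjα : j < (p ^ n : ℚ) * α := by
      rw [← horder]
      rw [← HahnSeries.order_eq_orderTop_of_ne_zero hd] at hj
      exact_mod_cast hj
    set f : ℚ → S.O := fun i => if i < α then 0 else S.coeff y i with hf
    have hsupp : ∀ ε : ℝ, 0 < ε → {i : ℚ | (p : ℝ) ^ (-ε) ≤ S.abv (f i)}.IsWF := by
      intro ε hε
      apply (S.coeff_support y ε hε).mono
      intro i hi
      simp only [Set.mem_setOf_eq, hf] at hi ⊢
      by_cases h : i < α
      · rw [if_pos h] at hi
        have : (0:ℝ) < (p:ℝ) ^ (-ε) := by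
          apply Real.rpow_pos_of_pos
          exact_mod_cast (Fact.out : p.Prime).pos
        rw [(S.abv_eq_zero 0).mpr rfl] at hi
        linarith
      · rwa [if_neg h] at hi
    obtain ⟨y₀, hy₀⟩ := S.coeff_surjective f hsupp
    have hy₀' : ∀ i, S.coeff y₀ i = if i < α then 0 else S.coeff y i := fun i =>
      congrFun hy₀ i
    have hsGe : ∀ i < α, S.coeff y₀ i = 0 := by
      intro i hi
      rw [hy₀' i]
      exact if_pos hi
    have hdiv : S.const π ∣ y - y₀ := by
      have := (S.const_pow_dvd_iff hπ 1 (y - y₀)).mpr ?_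
      · rwa [pow_one] at this
      · intro i
        rw [pow_one, S.coeff_sub, hy₀' i]
        by_cases h : i < α
        · rw [if_pos h, sub_zero, S.dvd_iff_red hπ]
          have : (S.redS y).coeff i = 0 :=
            HahnSeries.coeff_eq_zero_of_lt_order (by rw [← hα]; exact h)
          rwa [S.redS_coeff] at this
        · rw [if_neg h, sub_self]
          exact dvd_zero π
    have h2 := S.iter_dvd hπ n y y₀ hdiv
    rw [hy] at h2
    have h3 := (S.const_pow_dvd_iff hπ (n + 1) _).mp h2 j
    rw [S.coeff_sub] at h3
    have h4 : S.coeff (y₀ ^ p ^ n) j = 0 := by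
      have := S.suppGe_pow hsGe (p ^ n) j
      apply this
      exact_mod_cast hjα
    rw [h4, sub_zero] at h3
    exact dvd_trans (pow_dvd_pow π (by omega)) h3

end ImmSetting

/-- Let `τ : K^imm → Γ^imm` be the Teichmüller map and `ν` the
valuation on `K^imm` (normalized so that a uniformizer of `K` has valuation 1).  If
`x = ∑_{a=0}^∞ π^a τ(d_a)` with `d_a ∈ K^imm`, then for every `n ≥ 1` the smallest
rational `j` such that the coefficient `c_j` of `u^j` in `x` is `≢ 0 mod π^n` equals
`min {ν(d_0), …, ν(d_{n-1})}`. -/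
theorem teichmuller_expansion_order {p : ℕ} [Fact p.Prime] (S : ImmSetting p)
    (π : S.O) (hπ : Irreducible π)
    (x : S.Γimm) (d : ℕ → HahnSeries ℚ S.k)
    (hx : ∀ n : ℕ, ∃ z : S.Γimm,
      x - ∑ a ∈ Finset.range n, S.const (π ^ a) * S.τ (d a) = S.const (π ^ n) * z) :
    ∀ n : ℕ, 1 ≤ n →
      ({j : ℚ | ¬ (π ^ n ∣ S.coeff x j)}.Nonempty ↔
        (Finset.range n).inf (fun a => (d a).orderTop) ≠ ⊤) ∧
      ∀ j : ℚ, IsLeast {j : ℚ | ¬ (π ^ n ∣ S.coeff x j)} j ↔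
        ((j : WithTop ℚ) = (Finset.range n).inf (fun a => (d a).orderTop)) := by
  intro n hn
  obtain ⟨z, hz⟩ := hx n
  have hcoeff : ∀ j : ℚ, S.coeff x j =
      (∑ a ∈ Finset.range n, π ^ a * S.coeff (S.τ (d a)) j) + π ^ n * S.coeff z j := by
    intro j
    have h1 := congrArg (fun w => S.coeff w j) hz
    rw [S.coeff_sub, S.coeff_constMul, S.coeff_sum] at h1
    have h2 : ∀ a ∈ Finset.range n, S.coeff (S.const (π ^ a) * S.τ (d a)) j
        = π ^ a * S.coeff (S.τ (d a)) j := fun a _ => S.coeff_constMul _ _ _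
    rw [Finset.sum_congr rfl h2] at h1
    linear_combination h1
  set I := (Finset.range n).inf (fun a => (d a).orderTop) with hI
  have hmono : ∀ a ∈ Finset.range n, I ≤ (d a).orderTop := fun a ha => Finset.inf_le ha
  have hbelow : ∀ j : ℚ, (j : WithTop ℚ) < I → π ^ n ∣ S.coeff x j := by
    intro j hj
    rw [hcoeff j]
    apply dvd_add
    · apply Finset.dvd_sum
      intro a ha
      have hj2 : (j : WithTop ℚ) < (d a).orderTop := lt_of_lt_of_le hj (hmono a ha)
      have h3 := S.tau_coeff_dvd hπ (n - a) (d a) j hj2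
      have hle : a ≤ n := (Finset.mem_range.mp ha).le
      calc π ^ n = π ^ a * π ^ (n - a) := by rw [← pow_add]; congr 1; omega
        _ ∣ π ^ a * S.coeff (S.τ (d a)) j := mul_dvd_mul_left _ h3
    · exact Dvd.intro _ rfl
  by_cases htop : I = ⊤
  · have hempty : ∀ j : ℚ, π ^ n ∣ S.coeff x j := fun j =>
      hbelow j (htop ▸ WithTop.coe_lt_top j)
    refine ⟨⟨fun ⟨j, hj⟩ => absurd (hempty j) hj, fun h => absurd htop h⟩, ?_⟩
    intro j
    constructor
    · intro hl
      exact absurd (hempty j) hl.1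
    · intro hj
      exact absurd (hj.trans htop) (WithTop.coe_ne_top)
  · obtain ⟨j₀, hj₀⟩ := WithTop.ne_top_iff_exists.mp htop
    have hne : ((Finset.range n).filter (fun a => (d a).orderTop = I)).Nonempty := by
      obtain ⟨a, ha, hval⟩ := Finset.exists_mem_eq_inf (Finset.range n)
        (by rw [Finset.nonempty_range_iff]; omega) (fun a => (d a).orderTop)
      exact ⟨a, Finset.mem_filter.mpr ⟨ha, hval.symm⟩⟩
    set a₀ := ((Finset.range n).filter (fun a => (d a).orderTop = I)).min' hne with ha₀
    have ha₀mem := Finset.min'_mem _ hne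
    rw [Finset.mem_filter] at ha₀mem
    obtain ⟨ha₀range, ha₀val⟩ := ha₀mem
    have ha₀n : a₀ < n := Finset.mem_range.mp ha₀range
    set c := S.coeff (S.τ (d a₀)) j₀ with hc
    have hcunit : ¬ π ∣ c := by
      rw [hc, S.dvd_iff_red hπ, S.τ_red]
      have horder : (d a₀).orderTop = (j₀ : WithTop ℚ) := by rw [ha₀val, hj₀]
      exact HahnSeries.coeff_orderTop_ne horder
    have hkey : π ^ (a₀ + 1) ∣ S.coeff x j₀ - π ^ a₀ * c := by
      rw [hcoeff j₀]
      have hsplit : (∑ a ∈ Finset.range n, π ^ a * S.coeff (S.τ (d a)) j₀)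
          = π ^ a₀ * c + ∑ a ∈ (Finset.range n).erase a₀, π ^ a * S.coeff (S.τ (d a)) j₀ := by
        rw [hc, ← Finset.add_sum_erase _ _ ha₀range]
      rw [hsplit]
      have hring : π ^ a₀ * c + (∑ a ∈ (Finset.range n).erase a₀,
            π ^ a * S.coeff (S.τ (d a)) j₀) + π ^ n * S.coeff z j₀ - π ^ a₀ * c
          = (∑ a ∈ (Finset.range n).erase a₀, π ^ a * S.coeff (S.τ (d a)) j₀)
          + π ^ n * S.coeff z j₀ := by ring
      rw [hring]
      apply dvd_add
      · apply Finset.dvd_sum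
        intro a ha
        obtain ⟨hane, harange⟩ := Finset.mem_erase.mp ha
        by_cases hle : a ≤ a₀
        · have hnotmem : (d a).orderTop ≠ I := by
            intro h
            have h7 : a₀ ≤ a := Finset.min'_le _ a (Finset.mem_filter.mpr ⟨harange, h⟩)
            omega
          have hle' : (j₀ : WithTop ℚ) ≤ (d a).orderTop := hj₀ ▸ hmono a harange
          have hne' : (j₀ : WithTop ℚ) ≠ (d a).orderTop := fun h =>
            hnotmem (h.symm.trans hj₀)
          have h3 := S.tau_coeff_dvd hπ (a₀ + 1 - a) (d a) j₀ (lt_of_le_of_ne hle' hne')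
          calc π ^ (a₀ + 1) = π ^ a * π ^ (a₀ + 1 - a) := by
                rw [← pow_add]; congr 1; omega
            _ ∣ π ^ a * S.coeff (S.τ (d a)) j₀ := mul_dvd_mul_left _ h3
        · exact dvd_mul_of_dvd_left (pow_dvd_pow π (by omega)) _
      · exact dvd_mul_of_dvd_left (pow_dvd_pow π (by omega)) _
    have hmem : ¬ π ^ n ∣ S.coeff x j₀ := by
      intro hdvd
      have h6 : π ^ (a₀ + 1) ∣ S.coeff x j₀ :=
        dvd_trans (pow_dvd_pow π (by omega)) hdvd
      have h5 := dvd_sub h6 hkey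
      rw [sub_sub_cancel] at h5
      rw [pow_succ] at h5
      have h8 := (mul_dvd_mul_iff_left (pow_ne_zero a₀ hπ.ne_zero)).mp h5
      exact hcunit h8
    have hleast : IsLeast {j : ℚ | ¬ π ^ n ∣ S.coeff x j} j₀ := by
      constructor
      · exact hmem
      · intro j' hj'
        by_contra hlt
        push_neg at hlt
        exact hj' (hbelow j' (by rw [← hj₀]; exact_mod_cast hlt))
    refine ⟨⟨fun _ => htop, fun _ => ⟨j₀, hmem⟩⟩, ?_⟩
    intro j
    constructor
    · intro hl
      rw [hl.unique hleast, hj₀]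
    · intro hj
      have hjj : j = j₀ := by
        rw [← hj₀] at hj
        exact_mod_cast hj
      rw [hjj]; exact hleast
end
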